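/- arXiv:2303.05524 — 4 statements merged into one kernel-verified Lean document; each statement's English description precedes it below -/
import Mathlib

section
/- The sesquinormal function S_ν, defined for ν ∈ [0,∞) by S_ν(μ) := inf_{A ≥ Φ} T(A, Φ_{μ,ν}) where the infimum is over cdfs A pointwise dominating the standard normal cdf Φ, is itself a cumulative distribution function in μ: it is monotone non-decreasing, tends to 0 as μ → −∞, and tends to 1 as μ → +∞. -/
open Filter MeasureTheory ProbabilityTheory Set
open scoped NNReal
open scoped Topology ENNReal

/-- Total variation distance between two measures on ℝ. -/
noncomputable def tvDist (P Q : Measure ℝ) : ℝ :=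
  ⨆ s : {s : Set ℝ // MeasurableSet s}, |(P s.1).toReal - (Q s.1).toReal|

/-- The standard normal cdf `Φ`. -/
noncomputable def stdPhi (x : ℝ) : ℝ := (gaussianReal 0 1 (Set.Iic x)).toReal

/-- The sesquinormal cdf `S_ν(μ)`: the infimum, over cdfs `A` dominating the standard
normal cdf `Φ` pointwise, of the total variation distance between the distribution
with cdf `A` and the normal distribution with mean `μ` and variance `ν`. -/
noncomputable def sesqui (ν : ℝ≥0) (μ : ℝ) : ℝ :=
  sInf {d : ℝ | ∃ A : StieltjesFunction ℝ,
    Tendsto (fun x => A x) atBot (nhds 0) ∧ Tendsto (fun x => A x) atTop (nhds 1) ∧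
    (∀ x, stdPhi x ≤ A x) ∧ d = tvDist A.measure (gaussianReal μ ν)}

namespace SQA

instance : Nonempty {s : Set ℝ // MeasurableSet s} := ⟨⟨∅, MeasurableSet.empty⟩⟩

noncomputable def phiSF : StieltjesFunction ℝ := cdf (gaussianReal 0 1)

lemma stdPhi_eq (x : ℝ) : stdPhi x = phiSF x := (cdf_eq_real _ x).symm

instance : IsProbabilityMeasure phiSF.measure := by unfold phiSF; infer_instance

lemma stdPhi_nonneg (x : ℝ) : 0 ≤ stdPhi x := by rw [stdPhi_eq]; exact cdf_nonneg _ x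

lemma stdPhi_le_one (x : ℝ) : stdPhi x ≤ 1 := by rw [stdPhi_eq]; exact cdf_le_one _ x

lemma stdPhi_mono : Monotone stdPhi := by
  have : stdPhi = ⇑phiSF := funext stdPhi_eq
  rw [this]; exact phiSF.mono

lemma stdPhi_atBot : Tendsto stdPhi atBot (𝓝 0) := by
  have : stdPhi = ⇑phiSF := funext stdPhi_eq
  rw [this]; exact tendsto_cdf_atBot _

lemma stdPhi_atTop : Tendsto stdPhi atTop (𝓝 1) := by
  have : stdPhi = ⇑phiSF := funext stdPhi_eq
  rw [this]; exact tendsto_cdf_atTop _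

section TV
variable (P Q : Measure ℝ) [IsProbabilityMeasure P] [IsProbabilityMeasure Q]

lemma tv_bdd : BddAbove (range fun s : {s : Set ℝ // MeasurableSet s} =>
    |(P s.1).toReal - (Q s.1).toReal|) := by
  refine ⟨1, ?_⟩
  rintro x ⟨s, rfl⟩
  have h1 : (P s.1).toReal ≤ 1 := by
    simpa using ENNReal.toReal_mono (by simp) (prob_le_one (μ := P) (s := s.1))
  have h2 : (Q s.1).toReal ≤ 1 := by
    simpa using ENNReal.toReal_mono (by simp) (prob_le_one (μ := Q) (s := s.1))
  have h3 : 0 ≤ (P s.1).toReal := ENNReal.toReal_nonneg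
  have h4 : 0 ≤ (Q s.1).toReal := ENNReal.toReal_nonneg
  rw [abs_le]; constructor <;> linarith

lemma abs_le_tvDist {s : Set ℝ} (hs : MeasurableSet s) :
    |(P s).toReal - (Q s).toReal| ≤ tvDist P Q :=
  le_ciSup (tv_bdd P Q) (⟨s, hs⟩ : {s : Set ℝ // MeasurableSet s})

omit [IsProbabilityMeasure P] [IsProbabilityMeasure Q] in
lemma tvDist_le {c : ℝ} (h : ∀ s : Set ℝ, MeasurableSet s →
    |(P s).toReal - (Q s).toReal| ≤ c) : tvDist P Q ≤ c :=
  ciSup_le fun s => h s.1 s.2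

lemma tvDist_nonneg : 0 ≤ tvDist P Q := by
  have := abs_le_tvDist P Q MeasurableSet.empty
  simpa using this

lemma tvDist_le_one : tvDist P Q ≤ 1 := by
  refine tvDist_le P Q fun s hs => ?_
  have h1 : (P s).toReal ≤ 1 := by
    simpa using ENNReal.toReal_mono (by simp) (prob_le_one (μ := P) (s := s))
  have h2 : (Q s).toReal ≤ 1 := by
    simpa using ENNReal.toReal_mono (by simp) (prob_le_one (μ := Q) (s := s))
  rw [abs_le]
  constructor <;>
    linarith [ENNReal.toReal_nonneg (a := Q s), ENNReal.toReal_nonneg (a := P s)]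

lemma tvDist_map_le (c : ℝ) : tvDist (P.map (· + c)) (Q.map (· + c)) ≤ tvDist P Q := by
  haveI : IsProbabilityMeasure (P.map (· + c)) :=
    Measure.isProbabilityMeasure_map (measurable_add_const c).aemeasurable
  haveI : IsProbabilityMeasure (Q.map (· + c)) :=
    Measure.isProbabilityMeasure_map (measurable_add_const c).aemeasurable
  refine tvDist_le _ _ fun s hs => ?_
  rw [Measure.map_apply (measurable_add_const c) hs,
    Measure.map_apply (measurable_add_const c) hs]
  exact abs_le_tvDist P Q ((measurable_add_const c) hs)

lemma tvDist_map_eq (c : ℝ) : tvDist (P.map (· + c)) (Q.map (· + c)) = tvDist P Q := by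
  refine le_antisymm (tvDist_map_le P Q c) ?_
  haveI : IsProbabilityMeasure (P.map (· + c)) :=
    Measure.isProbabilityMeasure_map (measurable_add_const c).aemeasurable
  haveI : IsProbabilityMeasure (Q.map (· + c)) :=
    Measure.isProbabilityMeasure_map (measurable_add_const c).aemeasurable
  have h := tvDist_map_le (P.map (· + c)) (Q.map (· + c)) (-c)
  have hP : (P.map (· + c)).map (· + (-c)) = P := by
    rw [Measure.map_map (measurable_add_const (-c)) (measurable_add_const c)]
    have : ((· + (-c)) ∘ (· + c)) = (id : ℝ → ℝ) := by funext x; simp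
    rw [this, Measure.map_id]
  have hQ : (Q.map (· + c)).map (· + (-c)) = Q := by
    rw [Measure.map_map (measurable_add_const (-c)) (measurable_add_const c)]
    have : ((· + (-c)) ∘ (· + c)) = (id : ℝ → ℝ) := by funext x; simp
    rw [this, Measure.map_id]
  rwa [hP, hQ] at h

lemma tvDist_le_of_agree {s : Set ℝ} (hs : MeasurableSet s)
    (hagree : ∀ t : Set ℝ, MeasurableSet t → t ⊆ s → P t = Q t) :
    tvDist P Q ≤ (P sᶜ).toReal + (Q sᶜ).toReal := by
  refine tvDist_le P Q fun t ht => ?_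
  have hPs : P t = P (t ∩ s) + P (t \ s) := (measure_inter_add_diff t hs).symm
  have hQs : Q t = Q (t ∩ s) + Q (t \ s) := (measure_inter_add_diff t hs).symm
  have he : P (t ∩ s) = Q (t ∩ s) := hagree _ (ht.inter hs) inter_subset_right
  have hPt : (P t).toReal = (P (t ∩ s)).toReal + (P (t \ s)).toReal := by
    rw [hPs, ENNReal.toReal_add (measure_ne_top _ _) (measure_ne_top _ _)]
  have hQt : (Q t).toReal = (Q (t ∩ s)).toReal + (Q (t \ s)).toReal := by
    rw [hQs, ENNReal.toReal_add (measure_ne_top _ _) (measure_ne_top _ _)]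
  have he' : (P (t ∩ s)).toReal = (Q (t ∩ s)).toReal := by rw [he]
  have h1 : (P (t \ s)).toReal ≤ (P sᶜ).toReal :=
    ENNReal.toReal_mono (measure_ne_top _ _) (measure_mono (diff_subset_compl t s))
  have h2 : (Q (t \ s)).toReal ≤ (Q sᶜ).toReal :=
    ENNReal.toReal_mono (measure_ne_top _ _) (measure_mono (diff_subset_compl t s))
  have h3 : 0 ≤ (P (t \ s)).toReal := ENNReal.toReal_nonneg
  have h4 : 0 ≤ (Q (t \ s)).toReal := ENNReal.toReal_nonneg
  rw [hPt, hQt, abs_le]; constructor <;> linarith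

lemma toReal_Ioi (a : ℝ) : (P (Ioi a)).toReal = 1 - (P (Iic a)).toReal := by
  have hsplit : P (Iic a) + P (Ioi a) = 1 := by
    rw [← measure_union (Iic_disjoint_Ioi le_rfl) measurableSet_Ioi, Iic_union_Ioi,
      measure_univ]
  have h := congrArg ENNReal.toReal hsplit
  rw [ENNReal.toReal_add (measure_ne_top _ _) (measure_ne_top _ _)] at h
  simp only [ENNReal.toReal_one] at h
  linarith

lemma toReal_Iio (a : ℝ) : (P (Iio a)).toReal = 1 - (P (Ici a)).toReal := by
  have hsplit : P (Iio a) + P (Ici a) = 1 := by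
    rw [← measure_union (Iio_disjoint_Ici le_rfl) measurableSet_Ici, Iio_union_Ici,
      measure_univ]
  have h := congrArg ENNReal.toReal hsplit
  rw [ENNReal.toReal_add (measure_ne_top _ _) (measure_ne_top _ _)] at h
  simp only [ENNReal.toReal_one] at h
  linarith

end TV

section SF

noncomputable def maxSF (f g : StieltjesFunction ℝ) : StieltjesFunction ℝ where
  toFun := fun x => max (f x) (g x)
  mono' := fun _ _ h => max_le_max (f.mono h) (g.mono h)
  right_continuous' := fun x => (f.right_continuous x).max (g.right_continuous x)

lemma maxSF_apply (f g : StieltjesFunction ℝ) (x : ℝ) : maxSF f g x = max (f x) (g x) := rfl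

noncomputable def shiftSF (A : StieltjesFunction ℝ) (t : ℝ) : StieltjesFunction ℝ where
  toFun := fun x => A (x + t)
  mono' := fun x y h => A.mono (by linarith)
  right_continuous' := fun x => by
    have h1 : ContinuousWithinAt (fun y : ℝ => y + t) (Ici x) x :=
      (continuous_add_right t).continuousWithinAt
    have hm : MapsTo (fun y : ℝ => y + t) (Ici x) (Ici (x + t)) :=
      fun y hy => (add_le_add_iff_right t).2 hy
    have := ContinuousWithinAt.comp (g := ⇑A) (f := fun y : ℝ => y + t)
      (A.right_continuous (x + t)) h1 hm
    exact this

lemma shiftSF_apply (A : StieltjesFunction ℝ) (t x : ℝ) : shiftSF A t x = A (x + t) := rfl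

lemma shiftSF_measure (A : StieltjesFunction ℝ) (t : ℝ) :
    (shiftSF A t).measure = A.measure.map (· + (-t)) := by
  refine Measure.ext_of_Ioc' _ _ (fun u v _ => ?_) (fun u v huv => ?_)
  · simp [StieltjesFunction.measure_Ioc]
  · rw [Measure.map_apply (measurable_add_const (-t)) measurableSet_Ioc]
    have hpre : ((· + (-t)) ⁻¹' Ioc u v) = Ioc (u + t) (v + t) := by
      ext z; simp only [mem_preimage, mem_Ioc]; constructor <;> intro h <;>
        constructor <;> linarith [h.1, h.2]
    rw [hpre, StieltjesFunction.measure_Ioc, StieltjesFunction.measure_Ioc, shiftSF_apply,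
      shiftSF_apply]

lemma measure_eq_on_Ioi {f g : StieltjesFunction ℝ} {a : ℝ} (h : ∀ x, a ≤ x → f x = g x)
    {t : Set ℝ} (ht : MeasurableSet t) (hts : t ⊆ Ioi a) : f.measure t = g.measure t := by
  have hr : f.measure.restrict (Ioi a) = g.measure.restrict (Ioi a) := by
    refine Measure.ext_of_Ioc' _ _ (fun u v _ => ?_) (fun u v huv => ?_)
    · rw [Measure.restrict_apply measurableSet_Ioc]
      exact ((measure_mono inter_subset_left).trans_lt
        (by simp [StieltjesFunction.measure_Ioc])).ne
    · rw [Measure.restrict_apply measurableSet_Ioc, Measure.restrict_apply measurableSet_Ioc,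
        Ioc_inter_Ioi, StieltjesFunction.measure_Ioc, StieltjesFunction.measure_Ioc]
      have hua : a ≤ u ⊔ a := le_max_right _ _
      rcases le_or_gt a v with hav | hav
      · rw [h _ hua, h _ hav]
      · have h1 : f v - f (u ⊔ a) ≤ 0 := by
          have := f.mono (le_trans hav.le hua); linarith
        have h2 : g v - g (u ⊔ a) ≤ 0 := by
          have := g.mono (le_trans hav.le hua); linarith
        rw [ENNReal.ofReal_eq_zero.2 h1, ENNReal.ofReal_eq_zero.2 h2]
  calc f.measure t = f.measure.restrict (Ioi a) t := by
        rw [Measure.restrict_apply ht, inter_eq_self_of_subset_left hts]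
    _ = g.measure.restrict (Ioi a) t := by rw [hr]
    _ = g.measure t := by rw [Measure.restrict_apply ht, inter_eq_self_of_subset_left hts]

lemma measure_eq_on_Iic {f g : StieltjesFunction ℝ} {a : ℝ} (h : ∀ x, x ≤ a → f x = g x)
    {t : Set ℝ} (ht : MeasurableSet t) (hts : t ⊆ Iic a) : f.measure t = g.measure t := by
  have hr : f.measure.restrict (Iic a) = g.measure.restrict (Iic a) := by
    refine Measure.ext_of_Ioc' _ _ (fun u v _ => ?_) (fun u v huv => ?_)
    · rw [Measure.restrict_apply measurableSet_Ioc]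
      exact ((measure_mono inter_subset_left).trans_lt
        (by simp [StieltjesFunction.measure_Ioc])).ne
    · rw [Measure.restrict_apply measurableSet_Ioc, Measure.restrict_apply measurableSet_Ioc,
        Ioc_inter_Iic, StieltjesFunction.measure_Ioc, StieltjesFunction.measure_Ioc]
      have hva : v ⊓ a ≤ a := min_le_right _ _
      rcases le_or_gt u a with hau | hau
      · rw [h _ hva, h _ hau]
      · have huv' : v ⊓ a ≤ u := le_trans hva hau.le
        have h1 : f (v ⊓ a) - f u ≤ 0 := by have := f.mono huv'; linarith
        have h2 : g (v ⊓ a) - g u ≤ 0 := by have := g.mono huv'; linarith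
        rw [ENNReal.ofReal_eq_zero.2 h1, ENNReal.ofReal_eq_zero.2 h2]
  calc f.measure t = f.measure.restrict (Iic a) t := by
        rw [Measure.restrict_apply ht, inter_eq_self_of_subset_left hts]
    _ = g.measure.restrict (Iic a) t := by rw [hr]
    _ = g.measure t := by rw [Measure.restrict_apply ht, inter_eq_self_of_subset_left hts]

noncomputable def diracSF (μ : ℝ) : StieltjesFunction ℝ where
  toFun := fun x => if x < μ then 0 else 1
  mono' := fun x y hxy => by
    dsimp only
    split_ifs with h1 h2 h3
    · exact le_rfl
    · exact zero_le_one
    · exact absurd (hxy.trans_lt h3) h1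
    · exact le_rfl
  right_continuous' := by
    intro x
    rcases lt_or_ge x μ with hx | hx
    · refine (continuousWithinAt_const (b := (0:ℝ))).congr_of_eventuallyEq ?_ (if_pos hx)
      filter_upwards [nhdsWithin_le_nhds (Iio_mem_nhds hx)] with y hy
      exact if_pos hy
    · refine (continuousWithinAt_const (b := (1:ℝ))).congr_of_eventuallyEq ?_
        (if_neg (not_lt.2 hx))
      filter_upwards [self_mem_nhdsWithin] with y (hy : x ≤ y)
      exact if_neg (not_lt.2 (hx.trans hy))

lemma diracSF_apply (μ x : ℝ) : diracSF μ x = if x < μ then 0 else 1 := rfl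

lemma diracSF_atBot (μ : ℝ) : Tendsto (fun x => diracSF μ x) atBot (𝓝 0) := by
  refine Tendsto.congr' ?_ tendsto_const_nhds
  filter_upwards [eventually_lt_atBot μ] with x hx
  exact (if_pos hx).symm

lemma diracSF_atTop (μ : ℝ) : Tendsto (fun x => diracSF μ x) atTop (𝓝 1) := by
  refine Tendsto.congr' ?_ tendsto_const_nhds
  filter_upwards [eventually_ge_atTop μ] with x hx
  exact (if_neg (not_lt.2 hx)).symm

end SF

section Feas

def feasSet (ν : ℝ≥0) (μ : ℝ) : Set ℝ :=
  {d : ℝ | ∃ A : StieltjesFunction ℝ,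
    Tendsto (fun x => A x) atBot (nhds 0) ∧ Tendsto (fun x => A x) atTop (nhds 1) ∧
    (∀ x, stdPhi x ≤ A x) ∧ d = tvDist A.measure (gaussianReal μ ν)}

lemma sesqui_eq_inf (ν : ℝ≥0) (μ : ℝ) : sesqui ν μ = sInf (feasSet ν μ) := rfl

lemma feas_lb (ν : ℝ≥0) (μ : ℝ) : ∀ d ∈ feasSet ν μ, 0 ≤ d := by
  rintro d ⟨A, h0, h1, _, rfl⟩
  haveI := A.isProbabilityMeasure h0 h1
  exact tvDist_nonneg A.measure (gaussianReal μ ν)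

lemma feas_bdd (ν : ℝ≥0) (μ : ℝ) : BddBelow (feasSet ν μ) := ⟨0, feas_lb ν μ⟩

lemma feas_nonempty (ν : ℝ≥0) (μ : ℝ) : (feasSet ν μ).Nonempty :=
  ⟨_, ⟨phiSF, tendsto_cdf_atBot _, tendsto_cdf_atTop _, fun x => (stdPhi_eq x).le, rfl⟩⟩

lemma sesqui_le_tv (ν : ℝ≥0) (μ : ℝ) (A : StieltjesFunction ℝ)
    (h0 : Tendsto (fun x => A x) atBot (𝓝 0)) (h1 : Tendsto (fun x => A x) atTop (𝓝 1))
    (hdom : ∀ x, stdPhi x ≤ A x) :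
    sesqui ν μ ≤ tvDist A.measure (gaussianReal μ ν) :=
  csInf_le (feas_bdd ν μ) ⟨A, h0, h1, hdom, rfl⟩

lemma sesqui_nonneg (ν : ℝ≥0) (μ : ℝ) : 0 ≤ sesqui ν μ :=
  le_csInf (feas_nonempty ν μ) (feas_lb ν μ)

lemma sesqui_le_one (ν : ℝ≥0) (μ : ℝ) : sesqui ν μ ≤ 1 := by
  refine (sesqui_le_tv ν μ phiSF (tendsto_cdf_atBot _) (tendsto_cdf_atTop _)
    (fun x => (stdPhi_eq x).le)).trans ?_
  exact tvDist_le_one _ _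

lemma sesqui_mono (ν : ℝ≥0) : Monotone (sesqui ν) := by
  intro μ₁ μ₂ hle
  rw [sesqui_eq_inf, sesqui_eq_inf]
  refine csInf_le_csInf (feas_bdd ν μ₁) (feas_nonempty ν μ₂) ?_
  rintro d ⟨A, h0, h1, hdom, rfl⟩
  set t := μ₂ - μ₁ with ht
  refine ⟨shiftSF A t, ?_, ?_, ?_, ?_⟩
  · exact h0.comp (tendsto_atBot_add_const_right atBot t tendsto_id)
  · exact h1.comp (tendsto_atTop_add_const_right atTop t tendsto_id)
  · intro x
    exact (stdPhi_mono (by linarith : x ≤ x + t)).trans (hdom (x + t))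
  · haveI := A.isProbabilityMeasure h0 h1
    rw [shiftSF_measure]
    have hg : gaussianReal μ₁ ν = (gaussianReal μ₂ ν).map (· + (-t)) := by
      rw [gaussianReal_map_add_const]
      congr 1
      rw [ht]; ring
    rw [hg, tvDist_map_eq]

lemma gauss_cdf {ν : ℝ≥0} (hν : ν ≠ 0) (μ x : ℝ) :
    cdf (gaussianReal μ ν) x = stdPhi ((x - μ) / Real.sqrt ν) := by
  have hν' : (0:ℝ) < ν := lt_of_le_of_ne (by positivity) (by exact_mod_cast hν.symm)
  set σ := Real.sqrt (ν:ℝ) with hσdef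
  have hσ : 0 < σ := Real.sqrt_pos.2 hν'
  have hmap1 : (gaussianReal 0 1).map (σ * ·) = gaussianReal 0 ν := by
    rw [gaussianReal_map_const_mul]
    congr 1
    · simp
    · ext
      simp [hσdef, Real.sq_sqrt ν.2]
  have hmap2 : (gaussianReal 0 ν).map (· + μ) = gaussianReal μ ν := by
    rw [gaussianReal_map_add_const]; simp
  rw [cdf_eq_real, measureReal_def, ← hmap2, Measure.map_apply (measurable_add_const μ) measurableSet_Iic]
  have hpre1 : ((· + μ) ⁻¹' Iic x) = Iic (x - μ) := by
    ext y; simp [le_sub_iff_add_le]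
  rw [hpre1, ← hmap1, Measure.map_apply (measurable_const_mul σ) measurableSet_Iic]
  have hpre2 : ((σ * ·) ⁻¹' Iic (x - μ)) = Iic ((x - μ) / σ) := by
    ext y
    simp only [mem_preimage, mem_Iic]
    rw [le_div_iff₀ hσ, mul_comm]
  rw [hpre2]
  rfl

lemma gauss_Iic_shift (ν : ℝ≥0) (μ x : ℝ) :
    (gaussianReal μ ν (Iic x)).toReal = cdf (gaussianReal 0 ν) (x - μ) := by
  have h : gaussianReal μ ν = (gaussianReal 0 ν).map (· + μ) := by
    rw [gaussianReal_map_add_const, zero_add]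
  rw [h, Measure.map_apply (measurable_add_const μ) measurableSet_Iic]
  have hpre : ((· + μ) ⁻¹' Iic x) = Iic (x - μ) := by
    ext y; simp [le_sub_iff_add_le]
  rw [hpre, cdf_eq_real, measureReal_def]

lemma sesqui_ge (ν : ℝ≥0) (μ x : ℝ) :
    stdPhi x - (gaussianReal μ ν (Iic x)).toReal ≤ sesqui ν μ := by
  rw [sesqui_eq_inf]
  refine le_csInf (feas_nonempty ν μ) ?_
  rintro d ⟨A, h0, h1, hdom, rfl⟩
  haveI := A.isProbabilityMeasure h0 h1
  have h := abs_le_tvDist A.measure (gaussianReal μ ν) (measurableSet_Iic (a := x))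
  have hA : (A.measure (Iic x)).toReal = A x := by
    rw [A.measure_Iic h0, sub_zero, ENNReal.toReal_ofReal ((stdPhi_nonneg x).trans (hdom x))]
  have h2 : stdPhi x - (gaussianReal μ ν (Iic x)).toReal
      ≤ (A.measure (Iic x)).toReal - (gaussianReal μ ν (Iic x)).toReal := by
    rw [hA]; linarith [hdom x]
  exact h2.trans ((le_abs_self _).trans h)

end Feas

section Upper

lemma sesqui_le_right (ν : ℝ≥0) (μ a : ℝ)
    (hdom : ∀ x, a ≤ x → stdPhi x ≤ cdf (gaussianReal μ ν) x) :
    sesqui ν μ ≤ 2 * cdf (gaussianReal μ ν) a := by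
  set P := gaussianReal μ ν with hP
  set F := cdf P with hF
  set H := maxSF phiSF F with hH
  have h0 : Tendsto (fun x => H x) atBot (𝓝 0) := by
    have := (tendsto_cdf_atBot (gaussianReal 0 1)).max (tendsto_cdf_atBot P)
    rw [max_self] at this
    exact this.congr fun x => by rw [hH, maxSF_apply, phiSF]
  have h1 : Tendsto (fun x => H x) atTop (𝓝 1) := by
    have := (tendsto_cdf_atTop (gaussianReal 0 1)).max (tendsto_cdf_atTop P)
    rw [max_self] at this
    exact this.congr fun x => by rw [hH, maxSF_apply, phiSF]
  have hdomH : ∀ x, stdPhi x ≤ H x := fun x => (stdPhi_eq x).le.trans (le_max_left _ _)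
  haveI hPH : IsProbabilityMeasure H.measure := H.isProbabilityMeasure h0 h1
  have hHF : ∀ x, a ≤ x → H x = F x := fun x hx =>
    max_eq_right (((stdPhi_eq x).symm.le).trans (hdom x hx))
  have hagree : ∀ t : Set ℝ, MeasurableSet t → t ⊆ Ioi a → H.measure t = P t := by
    intro t ht hts
    rw [measure_eq_on_Ioi hHF ht hts, hF, measure_cdf]
  have hbound := tvDist_le_of_agree H.measure P measurableSet_Ioi hagree
  rw [compl_Ioi] at hbound
  have hHa : (H.measure (Iic a)).toReal = F a := by
    rw [H.measure_Iic h0 a, sub_zero,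
      ENNReal.toReal_ofReal ((stdPhi_nonneg a).trans (hdomH a))]
    exact hHF a le_rfl
  have hPa : (P (Iic a)).toReal = F a := (cdf_eq_real P a).symm
  rw [hHa, hPa] at hbound
  have := sesqui_le_tv ν μ H h0 h1 hdomH
  rw [← hP] at this
  linarith

lemma sesqui_le_left (ν : ℝ≥0) (μ a : ℝ)
    (hdom : ∀ x, x ≤ a → stdPhi x ≤ cdf (gaussianReal μ ν) x) :
    sesqui ν μ ≤ 2 * (1 - cdf (gaussianReal μ ν) a) := by
  set P := gaussianReal μ ν with hP
  set F := cdf P with hF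
  set H := maxSF phiSF F with hH
  have h0 : Tendsto (fun x => H x) atBot (𝓝 0) := by
    have := (tendsto_cdf_atBot (gaussianReal 0 1)).max (tendsto_cdf_atBot P)
    rw [max_self] at this
    exact this.congr fun x => by rw [hH, maxSF_apply, phiSF]
  have h1 : Tendsto (fun x => H x) atTop (𝓝 1) := by
    have := (tendsto_cdf_atTop (gaussianReal 0 1)).max (tendsto_cdf_atTop P)
    rw [max_self] at this
    exact this.congr fun x => by rw [hH, maxSF_apply, phiSF]
  have hdomH : ∀ x, stdPhi x ≤ H x := fun x => (stdPhi_eq x).le.trans (le_max_left _ _)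
  haveI hPH : IsProbabilityMeasure H.measure := H.isProbabilityMeasure h0 h1
  have hHF : ∀ x, x ≤ a → H x = F x := fun x hx =>
    max_eq_right (((stdPhi_eq x).symm.le).trans (hdom x hx))
  have hagree : ∀ t : Set ℝ, MeasurableSet t → t ⊆ Iic a → H.measure t = P t := by
    intro t ht hts
    rw [measure_eq_on_Iic hHF ht hts, hF, measure_cdf]
  have hbound := tvDist_le_of_agree H.measure P measurableSet_Iic hagree
  rw [compl_Iic] at hbound
  have hHa : (H.measure (Iic a)).toReal = F a := by
    rw [H.measure_Iic h0 a, sub_zero,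
      ENNReal.toReal_ofReal ((stdPhi_nonneg a).trans (hdomH a))]
    exact hHF a le_rfl
  have hPa : (P (Iic a)).toReal = F a := (cdf_eq_real P a).symm
  have hHoi : (H.measure (Ioi a)).toReal = 1 - F a := by
    rw [toReal_Ioi, hHa]
  have hPoi : (P (Ioi a)).toReal = 1 - F a := by
    rw [toReal_Ioi, hPa]
  rw [hHoi, hPoi] at hbound
  have := sesqui_le_tv ν μ H h0 h1 hdomH
  rw [← hP] at this
  linarith

lemma sesqui_zero_le (μ : ℝ) : sesqui 0 μ ≤ 2 * stdPhi μ := by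
  set H := maxSF phiSF (diracSF μ) with hH
  have h0 : Tendsto (fun x => H x) atBot (𝓝 0) := by
    have := (tendsto_cdf_atBot (gaussianReal 0 1)).max (diracSF_atBot μ)
    rw [max_self] at this
    exact this.congr fun x => by rw [hH, maxSF_apply, phiSF]
  have h1 : Tendsto (fun x => H x) atTop (𝓝 1) := by
    have := (tendsto_cdf_atTop (gaussianReal 0 1)).max (diracSF_atTop μ)
    rw [max_self] at this
    exact this.congr fun x => by rw [hH, maxSF_apply, phiSF]
  have hdomH : ∀ x, stdPhi x ≤ H x := fun x => (stdPhi_eq x).le.trans (le_max_left _ _)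
  haveI hPH : IsProbabilityMeasure H.measure := H.isProbabilityMeasure h0 h1
  have hev : ∀ y, y < μ → H y = phiSF y := by
    intro y hy
    rw [hH, maxSF_apply, diracSF_apply, if_pos hy]
    exact max_eq_left (cdf_nonneg _ y)
  have hsing : phiSF.measure {μ} = 0 := by
    have hm : phiSF.measure = gaussianReal 0 1 := measure_cdf _
    rw [hm]
    exact gaussianReal_absolutelyContinuous 0 one_ne_zero Real.volume_singleton
  have hll : Function.leftLim (⇑phiSF) μ = phiSF μ := by
    have h1' := phiSF.measure_singleton μ
    rw [hsing] at h1'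
    have h2' : phiSF μ - Function.leftLim (⇑phiSF) μ ≤ 0 := ENNReal.ofReal_eq_zero.1 h1'.symm
    have h3' : Function.leftLim (⇑phiSF) μ ≤ phiSF μ := phiSF.mono.leftLim_le le_rfl
    linarith
  have hllH : Function.leftLim (⇑H) μ = stdPhi μ := by
    have h2' : Tendsto (⇑phiSF) (𝓝[<] μ) (𝓝 (stdPhi μ)) := by
      rw [stdPhi_eq, ← hll]
      exact phiSF.mono.tendsto_leftLim μ
    have h3' : Tendsto (⇑H) (𝓝[<] μ) (𝓝 (stdPhi μ)) := by
      refine h2'.congr' ?_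
      filter_upwards [self_mem_nhdsWithin] with y (hy : y ∈ Iio μ)
      exact (hev y hy).symm
    exact leftLim_eq_of_tendsto h3'
  have hHμ : H μ = 1 := by
    rw [hH, maxSF_apply, diracSF_apply, if_neg (lt_irrefl μ)]
    exact max_eq_right (cdf_le_one _ μ)
  have hIci : (H.measure (Ici μ)).toReal = 1 - stdPhi μ := by
    rw [H.measure_Ici h1 μ, hllH, ENNReal.toReal_ofReal (by linarith [stdPhi_le_one μ])]
  have hIio : (H.measure (Iio μ)).toReal = stdPhi μ := by
    rw [toReal_Iio, hIci]; ring
  have hIic : (H.measure (Iic μ)).toReal = 1 := by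
    rw [H.measure_Iic h0 μ, sub_zero, hHμ]; simp
  have hIoi : (H.measure (Ioi μ)).toReal = 0 := by
    rw [toReal_Ioi, hIic]; ring
  have hsingH : (H.measure {μ}).toReal = 1 - stdPhi μ := by
    rw [H.measure_singleton, hllH, hHμ,
      ENNReal.toReal_ofReal (by linarith [stdPhi_le_one μ])]
  have htv : tvDist H.measure (gaussianReal μ 0) ≤ 2 * stdPhi μ := by
    rw [gaussianReal_zero_var]
    refine tvDist_le _ _ fun t ht => ?_
    rw [Measure.dirac_apply' μ ht]
    by_cases hμt : μ ∈ t
    · rw [indicator_of_mem hμt]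
      simp only [Pi.one_apply, ENNReal.toReal_one]
      have hub : (H.measure t).toReal ≤ 1 := by
        simpa using ENNReal.toReal_mono (by simp) (prob_le_one (μ := H.measure) (s := t))
      have hlb : 1 - stdPhi μ ≤ (H.measure t).toReal := by
        rw [← hsingH]
        exact ENNReal.toReal_mono (measure_ne_top _ _)
          (measure_mono (singleton_subset_iff.2 hμt))
      rw [abs_le]
      constructor <;> nlinarith [stdPhi_nonneg μ]
    · rw [indicator_of_notMem hμt]
      simp only [ENNReal.toReal_zero, sub_zero]
      have hsub : t ⊆ Iio μ ∪ Ioi μ := by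
        intro y hy
        rcases lt_trichotomy y μ with h | h | h
        · exact Or.inl h
        · exact absurd (h ▸ hy) hμt
        · exact Or.inr h
      have hmt : (H.measure t).toReal ≤ stdPhi μ := by
        have h1' : H.measure t ≤ H.measure (Iio μ) + H.measure (Ioi μ) :=
          (measure_mono hsub).trans (measure_union_le _ _)
        have h2' := ENNReal.toReal_mono
          (by finiteness) h1'
        rw [ENNReal.toReal_add (measure_ne_top _ _) (measure_ne_top _ _), hIio, hIoi] at h2'
        linarith
      rw [abs_of_nonneg ENNReal.toReal_nonneg]
      linarith [stdPhi_nonneg μ]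
  exact (sesqui_le_tv 0 μ H h0 h1 hdomH).trans htv

end Upper

end SQA

open SQA

/-- For every `ν ∈ [0,∞)`, the sesquinormal function `μ ↦ S_ν(μ)` is itself a cdf:
monotone non-decreasing, tending to `0` at `−∞` and to `1` at `+∞`. -/
theorem sesqui_isCDF (ν : ℝ≥0) :
    Monotone (sesqui ν) ∧
    Tendsto (sesqui ν) atBot (nhds 0) ∧
    Tendsto (sesqui ν) atTop (nhds 1) := by
  refine ⟨sesqui_mono ν, ?_, ?_⟩
  · -- atBot
    by_cases hν0 : ν = 0
    · subst hν0
      have h2 : Tendsto (fun μ => 2 * stdPhi μ) atBot (𝓝 0) := by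
        have := stdPhi_atBot.const_mul 2
        simpa using this
      exact tendsto_of_tendsto_of_tendsto_of_le_of_le tendsto_const_nhds h2
        (fun μ => sesqui_nonneg 0 μ) (fun μ => sesqui_zero_le μ)
    · have hν' : (0:ℝ) < ν := lt_of_le_of_ne (by positivity) (fun h => hν0 (by exact_mod_cast h.symm))
      set σ := Real.sqrt (ν:ℝ) with hσdef
      have hσpos : 0 < σ := Real.sqrt_pos.2 hν'
      rcases le_or_gt σ 1 with hσ1 | hσ1
      · -- σ ≤ 1
        have h2σ : (0:ℝ) < 2 - σ := by linarith
        have hub : ∀ μ : ℝ, μ ≤ 0 → sesqui ν μ ≤ 2 * stdPhi (μ / (2 - σ)) := by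
          intro μ hμ
          have hdom : ∀ x, 2*μ/(2-σ) ≤ x → stdPhi x ≤ cdf (gaussianReal μ ν) x := by
            intro x hx
            rw [gauss_cdf hν0, ← hσdef]
            apply stdPhi_mono
            rw [le_div_iff₀ hσpos]
            have hx' : 2*μ ≤ x*(2-σ) := (div_le_iff₀ h2σ).1 hx
            rcases le_or_gt 0 x with hx0 | hx0
            · nlinarith [mul_nonneg hx0 (by linarith : (0:ℝ) ≤ 1 - σ)]
            · nlinarith [mul_nonneg (neg_nonneg.2 hx0.le) hσpos.le]
          have hle := sesqui_le_right ν μ (2*μ/(2-σ)) hdom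
          rw [gauss_cdf hν0, ← hσdef] at hle
          have harg : (2*μ/(2-σ) - μ)/σ = μ/(2-σ) := by
            field_simp
            ring
          rwa [harg] at hle
        have htend : Tendsto (fun μ : ℝ => 2 * stdPhi (μ / (2 - σ))) atBot (𝓝 0) := by
          have h1 : Tendsto (fun μ : ℝ => μ / (2 - σ)) atBot atBot :=
            tendsto_id.atBot_div_const h2σ
          have := (stdPhi_atBot.comp h1).const_mul 2
          simpa using this
        refine tendsto_of_tendsto_of_tendsto_of_le_of_le' tendsto_const_nhds htend
          (Eventually.of_forall fun μ => sesqui_nonneg ν μ) ?_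
        filter_upwards [eventually_le_atBot (0:ℝ)] with μ hμ
        exact hub μ hμ
      · -- 1 < σ
        have h1σ : 1 - σ < 0 := by linarith
        have hub : ∀ μ : ℝ, sesqui ν μ ≤ 2 * (1 - stdPhi (μ / (1 - σ))) := by
          intro μ
          have hdom : ∀ x, x ≤ μ/(1-σ) → stdPhi x ≤ cdf (gaussianReal μ ν) x := by
            intro x hx
            rw [gauss_cdf hν0, ← hσdef]
            apply stdPhi_mono
            rw [le_div_iff₀ hσpos]
            have hx' : μ ≤ x*(1-σ) := (le_div_iff_of_neg h1σ).1 hx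
            nlinarith
          have hle := sesqui_le_left ν μ (μ/(1-σ)) hdom
          rw [gauss_cdf hν0, ← hσdef] at hle
          have harg : (μ/(1-σ) - μ)/σ = μ/(1-σ) := by
            have h1σne : (1-σ) ≠ 0 := h1σ.ne
            field_simp
            ring
          rwa [harg] at hle
        have htend : Tendsto (fun μ : ℝ => 2 * (1 - stdPhi (μ / (1 - σ)))) atBot (𝓝 0) := by
          have h1 : Tendsto (fun μ : ℝ => μ / (1 - σ)) atBot atTop := by
            have heq : (fun μ : ℝ => μ / (1 - σ)) = fun μ : ℝ => -(μ / (σ - 1)) := by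
              funext μ
              rw [show (1 - σ) = -(σ - 1) by ring, div_neg]
            rw [heq]
            exact tendsto_neg_atBot_atTop.comp (tendsto_id.atBot_div_const (by linarith))
          have h2 : Tendsto (fun μ : ℝ => stdPhi (μ / (1-σ))) atBot (𝓝 1) :=
            stdPhi_atTop.comp h1
          have h3 := (((tendsto_const_nhds : Tendsto (fun _ : ℝ => (1:ℝ)) atBot (𝓝 1))).sub h2).const_mul 2
          simpa using h3
        exact tendsto_of_tendsto_of_tendsto_of_le_of_le tendsto_const_nhds htend
          (fun μ => sesqui_nonneg ν μ) hub
  · -- atTop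
    have hg : Tendsto (fun μ => stdPhi (μ/2) - cdf (gaussianReal 0 ν) (μ/2 - μ))
        atTop (𝓝 (1 - 0)) := by
      refine Tendsto.sub ?_ ?_
      · exact stdPhi_atTop.comp (tendsto_id.atTop_div_const two_pos)
      · refine (tendsto_cdf_atBot (gaussianReal 0 ν)).comp ?_
        have heq : (fun μ : ℝ => μ/2 - μ) = fun μ : ℝ => -(μ/2) := by funext μ; ring
        rw [heq]
        exact tendsto_neg_atTop_atBot.comp (tendsto_id.atTop_div_const two_pos)
    rw [show (1:ℝ) - 0 = 1 by ring] at hg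
    refine tendsto_of_tendsto_of_tendsto_of_le_of_le hg tendsto_const_nhds ?_ ?_
    · intro μ
      have := sesqui_ge ν μ (μ/2)
      rwa [gauss_Iic_shift] at this
    · exact fun μ => sesqui_le_one ν μ
end

section
/- The sesquinormal cdf at parameter ν = 0 is the standard normal cdf, S_0(μ) = Φ(μ), and in the limit of large parameter, lim_{ν→∞} S_ν(√ν · μ) = Φ(μ) for every μ ∈ ℝ. -/
open Filter MeasureTheory ProbabilityTheory Set
open scoped NNReal

lemma stdPhi_nonneg (x : ℝ) : 0 ≤ stdPhi x := ENNReal.toReal_nonneg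
lemma stdPhi_le_one (x : ℝ) : stdPhi x ≤ 1 := by
  unfold stdPhi
  rw [← ENNReal.toReal_one]
  exact ENNReal.toReal_mono ENNReal.one_ne_top prob_le_one

lemma stdPhi_mono : Monotone stdPhi := fun a b hab => by
  unfold stdPhi
  exact ENNReal.toReal_mono (measure_ne_top _ _) (measure_mono (Iic_subset_Iic.2 hab))

lemma stdPhi_tendsto_atTop : Tendsto stdPhi atTop (nhds 1) := by
  have := tendsto_cdf_atTop (gaussianReal 0 1)
  convert this using 1
  funext x; exact (cdf_eq_real _ x).symm

lemma stdPhi_tendsto_atBot : Tendsto stdPhi atBot (nhds 0) := by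
  have := tendsto_cdf_atBot (gaussianReal 0 1)
  convert this using 1
  funext x; exact (cdf_eq_real _ x).symm

lemma gauss_Iic_scale {ν : ℝ≥0} (hν : ν ≠ 0) (m x : ℝ) :
    gaussianReal m ν (Set.Iic x) = gaussianReal 0 1 (Set.Iic ((x - m) / Real.sqrt ν)) := by
  have hσ : (0:ℝ) < Real.sqrt ν := Real.sqrt_pos.2 (by exact_mod_cast pos_iff_ne_zero.2 hν)
  have h1 : (gaussianReal 0 1).map (fun y => (Real.sqrt ν) * y) = gaussianReal 0 ν := by
    rw [show (fun y => (Real.sqrt ν) * y) = ((Real.sqrt ν) * ·) from rfl,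
      gaussianReal_map_const_mul]
    congr 1
    · ring
    · ext
      simp [Real.sq_sqrt (NNReal.coe_nonneg ν)]
  have h2 : (gaussianReal 0 ν).map (· + m) = gaussianReal m ν := by
    rw [gaussianReal_map_add_const]; congr 1; ring
  rw [← h2, Measure.map_apply (measurable_add_const m) measurableSet_Iic]
  have : (· + m) ⁻¹' (Set.Iic x) = Set.Iic (x - m) := by
    ext y; simp [le_sub_iff_add_le]
  rw [this, ← h1, Measure.map_apply (measurable_const_mul _) measurableSet_Iic]
  congr 1
  ext y
  simp only [mem_preimage, mem_Iic]
  rw [mul_comm, div_eq_mul_inv, ← le_div_iff₀ hσ, div_eq_mul_inv]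

lemma stdPhi_eq_cdf : stdPhi = cdf (gaussianReal 0 1) := by
  funext x; exact (cdf_eq_real _ x).symm

lemma gauss_singleton (a : ℝ) : gaussianReal 0 1 {a} = 0 :=
  gaussianReal_absolutelyContinuous 0 one_ne_zero (measure_singleton a)

lemma stdPhi_continuous : Continuous stdPhi := by
  rw [stdPhi_eq_cdf, continuous_iff_continuousAt]
  intro x
  set f := cdf (gaussianReal 0 1)
  rw [f.mono.continuousAt_iff_leftLim_eq_rightLim, f.rightLim_eq]
  have h0 : f.measure {x} = 0 := by
    rw [measure_cdf]; exact gauss_singleton x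
  rw [f.measure_singleton, ENNReal.ofReal_eq_zero] at h0
  have h1 : Function.leftLim f x ≤ f x := f.mono.leftLim_le le_rfl
  linarith


instance : Nonempty {s : Set ℝ // MeasurableSet s} := ⟨⟨∅, MeasurableSet.empty⟩⟩

lemma tvDist_le {P Q : Measure ℝ} {C : ℝ}
    (h : ∀ s : Set ℝ, MeasurableSet s → |(P s).toReal - (Q s).toReal| ≤ C) :
    tvDist P Q ≤ C :=
  ciSup_le fun s => h s.1 s.2

lemma tv_bddAbove (P Q : Measure ℝ) [IsProbabilityMeasure P] [IsProbabilityMeasure Q] :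
    BddAbove (Set.range fun s : {s : Set ℝ // MeasurableSet s} =>
      |(P s.1).toReal - (Q s.1).toReal|) := by
  refine ⟨1, fun x hx => ?_⟩
  obtain ⟨s, rfl⟩ := hx
  have h1 : (P s.1).toReal ≤ 1 := by
    rw [← ENNReal.toReal_one]; exact ENNReal.toReal_mono ENNReal.one_ne_top prob_le_one
  have h2 : (Q s.1).toReal ≤ 1 := by
    rw [← ENNReal.toReal_one]; exact ENNReal.toReal_mono ENNReal.one_ne_top prob_le_one
  have h3 : (0:ℝ) ≤ (P s.1).toReal := ENNReal.toReal_nonneg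
  have h4 : (0:ℝ) ≤ (Q s.1).toReal := ENNReal.toReal_nonneg
  rw [abs_sub_le_iff]; constructor <;> linarith

lemma le_tvDist {P Q : Measure ℝ} [IsProbabilityMeasure P] [IsProbabilityMeasure Q]
    {s : Set ℝ} (hs : MeasurableSet s) :
    |(P s).toReal - (Q s).toReal| ≤ tvDist P Q :=
  le_ciSup (tv_bddAbove P Q) ⟨s, hs⟩

lemma tvDist_nonneg {P Q : Measure ℝ} [IsProbabilityMeasure P] [IsProbabilityMeasure Q] :
    0 ≤ tvDist P Q :=
  le_trans (abs_nonneg _) (le_tvDist MeasurableSet.empty)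

lemma restrict_Iic_eq {F G : StieltjesFunction ℝ} (hF : Tendsto F atBot (nhds 0))
    (hG : Tendsto G atBot (nhds 0)) {c : ℝ} (h : ∀ x ≤ c, F x = G x)
    (hF1 : Tendsto F atTop (nhds 1)) (hG1 : Tendsto G atTop (nhds 1)) :
    F.measure.restrict (Set.Iic c) = G.measure.restrict (Set.Iic c) := by
  have : IsProbabilityMeasure F.measure := F.isProbabilityMeasure hF hF1
  have : IsProbabilityMeasure G.measure := G.isProbabilityMeasure hG hG1
  refine Measure.ext_of_Iic _ _ (fun x => ?_)
  rw [Measure.restrict_apply measurableSet_Iic, Measure.restrict_apply measurableSet_Iic,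
    Set.Iic_inter_Iic, F.measure_Iic hF, G.measure_Iic hG, h _ (min_le_right x c)]

lemma cdf_le_one' {F : StieltjesFunction ℝ} (hF1 : Tendsto F atTop (nhds 1)) (x : ℝ) : F x ≤ 1 :=
  F.mono.ge_of_tendsto hF1 x

lemma cdf_nonneg' {F : StieltjesFunction ℝ} (hF0 : Tendsto F atBot (nhds 0)) (x : ℝ) : 0 ≤ F x :=
  F.mono.le_of_tendsto hF0 x

lemma measure_Ioi_toReal {F : StieltjesFunction ℝ} (hF0 : Tendsto F atBot (nhds 0))
    (hF1 : Tendsto F atTop (nhds 1)) (c : ℝ) :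
    (F.measure (Set.Ioi c)).toReal = 1 - F c := by
  have hp : IsProbabilityMeasure F.measure := F.isProbabilityMeasure hF0 hF1
  have : F.measure (Set.Ioi c) = 1 - ENNReal.ofReal (F c) := by
    rw [← Set.compl_Iic, measure_compl measurableSet_Iic (measure_ne_top _ _),
      F.measure_Iic hF0, measure_univ, sub_zero]
  rw [this, ENNReal.toReal_sub_of_le _ ENNReal.one_ne_top]
  · rw [ENNReal.toReal_one, ENNReal.toReal_ofReal (cdf_nonneg' hF0 c)]
  · exact ENNReal.ofReal_le_one.2 (cdf_le_one' hF1 c)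

lemma tvDist_le_of_eqOn_Iic {F G : StieltjesFunction ℝ} (hF0 : Tendsto F atBot (nhds 0))
    (hF1 : Tendsto F atTop (nhds 1)) (hG0 : Tendsto G atBot (nhds 0))
    (hG1 : Tendsto G atTop (nhds 1)) {c : ℝ} (h : ∀ x ≤ c, F x = G x) :
    tvDist F.measure G.measure ≤ 1 - F c := by
  have hres := restrict_Iic_eq hF0 hG0 h hF1 hG1
  refine tvDist_le (fun s hs => ?_)
  have hsplit : ∀ H : StieltjesFunction ℝ, H.measure s = H.measure (s ∩ Set.Iic c) + H.measure (s ∩ Set.Ioi c) := by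
    intro H
    rw [← measure_union (Disjoint.mono inter_subset_right inter_subset_right
        (Iic_disjoint_Ioi le_rfl)) (hs.inter measurableSet_Ioi)]
    congr 1
    rw [← Set.inter_union_distrib_left, Set.Iic_union_Ioi, Set.inter_univ]
  have heq : F.measure (s ∩ Set.Iic c) = G.measure (s ∩ Set.Iic c) := by
    have : ∀ H : StieltjesFunction ℝ, H.measure (s ∩ Set.Iic c) = H.measure.restrict (Set.Iic c) s := by
      intro H; rw [Measure.restrict_apply hs]
    rw [this, this, hres]
  have hFfin : ∀ t : Set ℝ, F.measure t ≠ ⊤ := by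
    have : IsProbabilityMeasure F.measure := F.isProbabilityMeasure hF0 hF1
    exact fun t => measure_ne_top _ _
  have hGfin : ∀ t : Set ℝ, G.measure t ≠ ⊤ := by
    have : IsProbabilityMeasure G.measure := G.isProbabilityMeasure hG0 hG1
    exact fun t => measure_ne_top _ _
  rw [hsplit F, hsplit G, heq, ENNReal.toReal_add (hGfin _) (hFfin _),
    ENNReal.toReal_add (hGfin _) (hGfin _)]
  have hbF : (F.measure (s ∩ Set.Ioi c)).toReal ≤ 1 - F c := by
    rw [← measure_Ioi_toReal hF0 hF1 c]
    exact ENNReal.toReal_mono (hFfin _) (measure_mono inter_subset_right)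
  have hbG : (G.measure (s ∩ Set.Ioi c)).toReal ≤ 1 - F c := by
    rw [h c le_rfl, ← measure_Ioi_toReal hG0 hG1 c]
    exact ENNReal.toReal_mono (hGfin _) (measure_mono inter_subset_right)
  have h1 : (0:ℝ) ≤ (F.measure (s ∩ Set.Ioi c)).toReal := ENNReal.toReal_nonneg
  have h2 : (0:ℝ) ≤ (G.measure (s ∩ Set.Ioi c)).toReal := ENNReal.toReal_nonneg
  rw [abs_sub_le_iff]
  constructor <;> [skip; skip] <;> linarith


noncomputable def stepA (μ : ℝ) : StieltjesFunction ℝ where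
  toFun := fun x => if x < μ then stdPhi x else 1
  mono' := by
    intro a b hab
    by_cases ha : a < μ <;> by_cases hb : b < μ <;> simp only [ha, hb, if_true, if_false]
    · exact stdPhi_mono hab
    · exact stdPhi_le_one a
    · exact absurd (lt_of_le_of_lt hab hb) ha
    · exact le_rfl
  right_continuous' := by
    intro x
    by_cases hx : x < μ
    · have h : (fun y => if y < μ then stdPhi y else 1) =ᶠ[nhds x] stdPhi := by
        filter_upwards [Iio_mem_nhds hx] with y hy
        exact if_pos (show y < μ from hy)
      exact (stdPhi_continuous.continuousAt.congr h.symm).continuousWithinAt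
    · refine (continuousWithinAt_const (b := (1:ℝ))).congr (fun y hy => ?_) ?_
      · have : ¬ y < μ := fun hc => hx (lt_of_le_of_lt (mem_Ici.1 hy) hc)
        exact if_neg this
      · exact if_neg hx

lemma stepA_apply (μ x : ℝ) : stepA μ x = if x < μ then stdPhi x else 1 := rfl

lemma stepA_atBot (μ : ℝ) : Tendsto (stepA μ) atBot (nhds 0) := by
  refine stdPhi_tendsto_atBot.congr' ?_
  filter_upwards [eventually_lt_atBot μ] with y hy
  rw [stepA_apply, if_pos hy]

lemma stepA_atTop (μ : ℝ) : Tendsto (stepA μ) atTop (nhds 1) := by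
  refine tendsto_const_nhds.congr' ?_
  filter_upwards [eventually_ge_atTop μ] with y hy
  rw [stepA_apply, if_neg (not_lt.2 hy)]

lemma stepA_ge (μ x : ℝ) : stdPhi x ≤ stepA μ x := by
  rw [stepA_apply]
  split
  · exact le_rfl
  · exact stdPhi_le_one x

lemma stepA_leftLim (μ : ℝ) : Function.leftLim (stepA μ) μ = stdPhi μ := by
  apply leftLim_eq_of_tendsto
  refine (stdPhi_continuous.continuousAt.tendsto.mono_left nhdsWithin_le_nhds).congr' ?_
  filter_upwards [self_mem_nhdsWithin] with y (hy : y < μ)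
  rw [stepA_apply, if_pos hy]

lemma stepA_singleton (μ : ℝ) :
    ((stepA μ).measure {μ}).toReal = 1 - stdPhi μ := by
  rw [StieltjesFunction.measure_singleton, stepA_leftLim, stepA_apply]
  simp only [lt_irrefl, if_false]
  exact ENNReal.toReal_ofReal (by linarith [stdPhi_le_one μ])

lemma sesqui_zero (μ : ℝ) : sesqui 0 μ = stdPhi μ := by
  have hdirac : gaussianReal μ 0 = Measure.dirac μ := gaussianReal_zero_var μ
  -- lower bound : every element of the set is ≥ stdPhi μ
  have hlb : ∀ d ∈ {d : ℝ | ∃ A : StieltjesFunction ℝ,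
      Tendsto (fun x => A x) atBot (nhds 0) ∧ Tendsto (fun x => A x) atTop (nhds 1) ∧
      (∀ x, stdPhi x ≤ A x) ∧ d = tvDist A.measure (gaussianReal μ 0)}, stdPhi μ ≤ d := by
    rintro d ⟨A, hA0, hA1, hAge, rfl⟩
    have hPA : IsProbabilityMeasure A.measure := A.isProbabilityMeasure hA0 hA1
    rw [hdirac]
    have key : ∀ x < μ, stdPhi x ≤ tvDist A.measure (Measure.dirac μ) := by
      intro x hx
      have h1 : (Measure.dirac μ (Iic x)) = 0 := by
        rw [Measure.dirac_apply' _ measurableSet_Iic]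
        simp [not_le.2 hx]
      have h2 := le_tvDist (P := A.measure) (Q := Measure.dirac μ) (s := Iic x) measurableSet_Iic
      rw [h1, A.measure_Iic hA0, ENNReal.toReal_zero, sub_zero, sub_zero,
        ENNReal.toReal_ofReal (cdf_nonneg' hA0 x), abs_of_nonneg (cdf_nonneg' hA0 x)] at h2
      exact le_trans (hAge x) h2
    have : Tendsto stdPhi (nhdsWithin μ (Iio μ)) (nhds (stdPhi μ)) :=
      stdPhi_continuous.continuousAt.tendsto.mono_left nhdsWithin_le_nhds
    refine le_of_tendsto this ?_
    filter_upwards [self_mem_nhdsWithin] with y (hy : y < μ) using key y hy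
  -- upper bound element
  have hub : tvDist (stepA μ).measure (gaussianReal μ 0) ≤ stdPhi μ := by
    rw [hdirac]
    have hPA : IsProbabilityMeasure (stepA μ).measure :=
      (stepA μ).isProbabilityMeasure (stepA_atBot μ) (stepA_atTop μ)
    refine tvDist_le (fun s hs => ?_)
    have htot : ((stepA μ).measure s).toReal ≤ 1 := by
      rw [← ENNReal.toReal_one]
      exact ENNReal.toReal_mono ENNReal.one_ne_top prob_le_one
    have hnn : (0:ℝ) ≤ ((stepA μ).measure s).toReal := ENNReal.toReal_nonneg
    by_cases hμ : μ ∈ s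
    · have hd : Measure.dirac μ s = 1 := by
        rw [Measure.dirac_apply' _ hs]; simp [hμ]
      have hsing : ((stepA μ).measure {μ}).toReal ≤ ((stepA μ).measure s).toReal :=
        ENNReal.toReal_mono (measure_ne_top _ _) (measure_mono (singleton_subset_iff.2 hμ))
      rw [stepA_singleton] at hsing
      rw [hd, ENNReal.toReal_one, abs_sub_comm, abs_of_nonneg (by linarith)]
      linarith
    · have hd : Measure.dirac μ s = 0 := by
        rw [Measure.dirac_apply' _ hs]; simp [hμ]
      have hsub : s ⊆ {μ}ᶜ := fun y hy => by
        simp only [mem_compl_iff, mem_singleton_iff]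
        rintro rfl; exact hμ hy
      have hcompl : ((stepA μ).measure {μ}ᶜ).toReal = stdPhi μ := by
        rw [measure_compl (measurableSet_singleton μ) (measure_ne_top _ _), measure_univ]
        rw [ENNReal.toReal_sub_of_le (prob_le_one) ENNReal.one_ne_top, ENNReal.toReal_one,
          stepA_singleton]
        ring
      have : ((stepA μ).measure s).toReal ≤ stdPhi μ := by
        rw [← hcompl]
        exact ENNReal.toReal_mono (measure_ne_top _ _) (measure_mono hsub)
      rw [hd, ENNReal.toReal_zero, sub_zero, abs_of_nonneg hnn]
      exact this
  refine le_antisymm ?_ (le_csInf ⟨_, stepA μ, stepA_atBot μ, stepA_atTop μ, stepA_ge μ, rfl⟩ hlb)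
  exact le_trans (csInf_le ⟨stdPhi μ, hlb⟩
    ⟨stepA μ, stepA_atBot μ, stepA_atTop μ, stepA_ge μ, rfl⟩) hub

noncomputable def maxCdf (P : Measure ℝ) : StieltjesFunction ℝ where
  toFun := fun x => max (stdPhi x) (cdf P x)
  mono' := fun a b hab => max_le_max (stdPhi_mono hab) ((cdf P).mono hab)
  right_continuous' := fun x =>
    (stdPhi_continuous.continuousWithinAt).max ((cdf P).right_continuous' x)

lemma maxCdf_apply (P : Measure ℝ) (x : ℝ) : maxCdf P x = max (stdPhi x) (cdf P x) := rfl

lemma maxCdf_atBot (P : Measure ℝ) : Tendsto (maxCdf P) atBot (nhds 0) := by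
  have := stdPhi_tendsto_atBot.max (tendsto_cdf_atBot P)
  rw [max_self] at this
  exact this

lemma maxCdf_atTop (P : Measure ℝ) : Tendsto (maxCdf P) atTop (nhds 1) := by
  have := stdPhi_tendsto_atTop.max (tendsto_cdf_atTop P)
  rw [max_self] at this
  exact this

lemma maxCdf_ge (P : Measure ℝ) (x : ℝ) : stdPhi x ≤ maxCdf P x := le_max_left _ _

lemma sesqui_set_nonempty (ν : ℝ≥0) (m : ℝ) :
    Set.Nonempty {d : ℝ | ∃ A : StieltjesFunction ℝ,
      Tendsto (fun x => A x) atBot (nhds 0) ∧ Tendsto (fun x => A x) atTop (nhds 1) ∧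
      (∀ x, stdPhi x ≤ A x) ∧ d = tvDist A.measure (gaussianReal m ν)} :=
  ⟨_, maxCdf (gaussianReal m ν), maxCdf_atBot _, maxCdf_atTop _, maxCdf_ge _, rfl⟩

lemma sesqui_set_bddBelow (ν : ℝ≥0) (m : ℝ) :
    BddBelow {d : ℝ | ∃ A : StieltjesFunction ℝ,
      Tendsto (fun x => A x) atBot (nhds 0) ∧ Tendsto (fun x => A x) atTop (nhds 1) ∧
      (∀ x, stdPhi x ≤ A x) ∧ d = tvDist A.measure (gaussianReal m ν)} := by
  refine ⟨0, ?_⟩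
  rintro d ⟨A, hA0, hA1, _, rfl⟩
  have : IsProbabilityMeasure A.measure := A.isProbabilityMeasure hA0 hA1
  exact tvDist_nonneg

lemma cdf_gauss_eq {ν : ℝ≥0} (hν : ν ≠ 0) (m x : ℝ) :
    cdf (gaussianReal m ν) x = stdPhi ((x - m) / Real.sqrt ν) := by
  rw [cdf_eq_real, measureReal_def, gauss_Iic_scale hν]
  rfl

lemma sesqui_le_bound {ν : ℝ≥0} (hν : ν ≠ 0) (m c : ℝ)
    (hc : ∀ x ≤ c, stdPhi x ≤ stdPhi ((x - m) / Real.sqrt ν)) :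
    sesqui ν m ≤ 1 - stdPhi ((c - m) / Real.sqrt ν) := by
  set P := gaussianReal m ν
  set F := maxCdf P
  have heq : ∀ x ≤ c, F x = cdf P x := by
    intro x hx
    rw [maxCdf_apply, cdf_gauss_eq hν, max_eq_right (hc x hx)]
  have hF : tvDist F.measure P ≤ 1 - stdPhi ((c - m) / Real.sqrt ν) := by
    have h := tvDist_le_of_eqOn_Iic (maxCdf_atBot P) (maxCdf_atTop P)
      (tendsto_cdf_atBot P) (tendsto_cdf_atTop P) (G := cdf P) heq
    rw [measure_cdf] at h
    have hFc : F c = stdPhi ((c - m) / Real.sqrt ν) := by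
      rw [heq c le_rfl, cdf_gauss_eq hν]
    rw [hFc] at h
    exact h
  refine le_trans (csInf_le (sesqui_set_bddBelow ν m)
    ⟨F, maxCdf_atBot _, maxCdf_atTop _, maxCdf_ge _, rfl⟩) hF

lemma sesqui_ge_bound {ν : ℝ≥0} (hν : ν ≠ 0) (m x : ℝ) :
    stdPhi x - stdPhi ((x - m) / Real.sqrt ν) ≤ sesqui ν m := by
  refine le_csInf (sesqui_set_nonempty ν m) ?_
  rintro d ⟨A, hA0, hA1, hAge, rfl⟩
  have hPA : IsProbabilityMeasure A.measure := A.isProbabilityMeasure hA0 hA1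
  have h := le_tvDist (P := A.measure) (Q := gaussianReal m ν) (s := Set.Iic x) measurableSet_Iic
  rw [A.measure_Iic hA0, sub_zero, ENNReal.toReal_ofReal (cdf_nonneg' hA0 x),
    gauss_Iic_scale hν] at h
  calc stdPhi x - stdPhi ((x - m) / Real.sqrt ν)
      ≤ A x - stdPhi ((x - m) / Real.sqrt ν) := by linarith [hAge x]
    _ ≤ |A x - ((gaussianReal 0 1) (Set.Iic ((x - m) / Real.sqrt ν))).toReal| := le_abs_self _
    _ ≤ _ := h

lemma stdPhi_neg (x : ℝ) : stdPhi (-x) = 1 - stdPhi x := by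
  have hmap : (gaussianReal 0 1).map ((-1 : ℝ) * ·) = gaussianReal 0 1 := by
    rw [gaussianReal_map_const_mul]
    congr 1
    · ring
    · ext; norm_num
  have h1 : gaussianReal 0 1 (Set.Iic (-x)) = gaussianReal 0 1 (Set.Ici x) := by
    conv_lhs => rw [← hmap]
    rw [Measure.map_apply (measurable_const_mul _) measurableSet_Iic]
    congr 1
    ext y
    simp only [mem_preimage, mem_Iic, mem_Ici]
    constructor <;> intro h <;> linarith
  have hll : Function.leftLim (cdf (gaussianReal 0 1)) x = cdf (gaussianReal 0 1) x := by
    refine leftLim_eq_of_tendsto ?_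
    rw [← stdPhi_eq_cdf]
    exact stdPhi_continuous.continuousAt.tendsto.mono_left nhdsWithin_le_nhds
  have h2 := (cdf (gaussianReal 0 1)).measure_Ici (tendsto_cdf_atTop _) x
  rw [measure_cdf, hll, ← stdPhi_eq_cdf] at h2
  unfold stdPhi
  rw [h1, h2, ENNReal.toReal_ofReal (by linarith [stdPhi_le_one x])]
  rfl

lemma sqrt_tendsto_atTop : Tendsto Real.sqrt atTop atTop := by
  refine tendsto_atTop_atTop.2 (fun b => ⟨b ^ 2, fun x hx => ?_⟩)
  calc b ≤ |b| := le_abs_self b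
    _ = Real.sqrt (b ^ 2) := (Real.sqrt_sq_eq_abs b).symm
    _ ≤ Real.sqrt x := Real.sqrt_le_sqrt hx

lemma nnreal_sqrt_tendsto : Tendsto (fun ν : ℝ≥0 => Real.sqrt ν) atTop atTop :=
  sqrt_tendsto_atTop.comp (NNReal.tendsto_coe_atTop.2 tendsto_id)

theorem sesqui_tendsto (μ : ℝ) :
    Tendsto (fun ν : ℝ≥0 => sesqui ν (Real.sqrt ν * μ)) atTop (nhds (stdPhi μ)) := by
  rw [tendsto_order]
  constructor
  · -- lower bound
    intro a ha
    have h1 : a + (1 - stdPhi μ) < 1 := by linarith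
    obtain ⟨x, hx⟩ := (stdPhi_tendsto_atTop.eventually (eventually_gt_nhds h1)).exists
    have hdiv : Tendsto (fun ν : ℝ≥0 => x / Real.sqrt ν - μ) atTop (nhds (-μ)) := by
      have := Tendsto.div_atTop (tendsto_const_nhds (x := x)) nnreal_sqrt_tendsto
      have := this.sub_const μ
      simpa using this
    have hg : Tendsto (fun ν : ℝ≥0 => stdPhi (x / Real.sqrt ν - μ)) atTop
        (nhds (1 - stdPhi μ)) := by
      have := (stdPhi_continuous.tendsto (-μ)).comp hdiv
      rwa [stdPhi_neg] at this
    have hev : ∀ᶠ ν : ℝ≥0 in atTop, stdPhi (x / Real.sqrt ν - μ) < stdPhi x - a :=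
      hg.eventually (eventually_lt_nhds (by linarith))
    filter_upwards [hev, eventually_ge_atTop (1 : ℝ≥0)] with ν hν h1ν
    have hν0 : ν ≠ 0 := by
      intro h; rw [h] at h1ν; exact absurd h1ν (by norm_num)
    have hσ : (0:ℝ) < Real.sqrt ν := Real.sqrt_pos.2 (by exact_mod_cast pos_iff_ne_zero.2 hν0)
    have hkey := sesqui_ge_bound hν0 (Real.sqrt ν * μ) x
    have harg : (x - Real.sqrt ν * μ) / Real.sqrt ν = x / Real.sqrt ν - μ := by
      field_simp
    rw [harg] at hkey
    linarith
  · -- upper bound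
    intro b hb
    -- the cutoff point c ν
    set c : ℝ≥0 → ℝ := fun ν => -μ * Real.sqrt ν / (Real.sqrt ν - 1) with hc_def
    have hsub : Tendsto (fun ν : ℝ≥0 => Real.sqrt ν - 1) atTop atTop :=
      tendsto_atTop_add_const_right _ (-1) nnreal_sqrt_tendsto
    have hctend : Tendsto c atTop (nhds (-μ)) := by
      have h0 : Tendsto (fun ν : ℝ≥0 => -μ - μ / (Real.sqrt ν - 1)) atTop (nhds (-μ)) := by
        have := Tendsto.div_atTop (tendsto_const_nhds (x := μ)) hsub
        have := (tendsto_const_nhds (x := -μ)).sub this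
        simpa using this
      refine h0.congr' ?_
      filter_upwards [hsub.eventually_gt_atTop 1] with ν hν
      have h1 : Real.sqrt ν - 1 ≠ 0 := by linarith
      rw [hc_def]
      field_simp
      ring
    have hbound : Tendsto (fun ν : ℝ≥0 => 1 - stdPhi (c ν)) atTop (nhds (stdPhi μ)) := by
      have := ((stdPhi_continuous.tendsto (-μ)).comp hctend).const_sub 1
      rwa [stdPhi_neg, sub_sub_cancel] at this
    have hev : ∀ᶠ ν : ℝ≥0 in atTop, 1 - stdPhi (c ν) < b :=
      hbound.eventually (eventually_lt_nhds hb)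
    filter_upwards [hev, (nnreal_sqrt_tendsto.eventually_gt_atTop 1)] with ν hν hσ1
    have hσ : (0:ℝ) < Real.sqrt ν := by linarith
    have hν0 : ν ≠ 0 := by
      intro h
      rw [h] at hσ1
      simp [Real.sqrt_zero] at hσ1
      linarith
    have hkey := sesqui_le_bound hν0 (Real.sqrt ν * μ) (c ν) ?_
    · have harg : (c ν - Real.sqrt ν * μ) / Real.sqrt ν = c ν := by
        rw [hc_def]
        have h1 : Real.sqrt ν - 1 ≠ 0 := by linarith
        field_simp
        ring
      rw [harg] at hkey
      linarith
    · intro y hy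
      apply stdPhi_mono
      have h1 : (0:ℝ) < Real.sqrt ν - 1 := by linarith
      rw [hc_def] at hy
      have hy' : y * (Real.sqrt ν - 1) ≤ -μ * Real.sqrt ν := (le_div_iff₀ h1).1 hy
      rw [le_div_iff₀ hσ]
      nlinarith

/-- `S_0(μ) = Φ(μ)` and `lim_{ν→∞} S_ν(√ν·μ) = Φ(μ)`. -/
theorem sesqui_extreme_cases :
    (∀ μ : ℝ, sesqui 0 μ = stdPhi μ) ∧
    (∀ μ : ℝ, Tendsto (fun ν : ℝ≥0 => sesqui ν (Real.sqrt ν * μ)) atTop (nhds (stdPhi μ))) := by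
  exact ⟨sesqui_zero, sesqui_tendsto⟩
end

section
/- Let ρ, σ be density operators on a finite-dimensional Hilbert space with σ of full support, and suppose ρ^{-1/2}σρ^{-1/2} has a non-degenerate maximal eigenvalue (ρ also full rank). Then for every x with 0 ≤ x ≤ λ_min(ρ), the optimal type-II hypothesis testing error satisfies 1 − β_x(ρ‖σ) = x · exp(−D_{−∞}(ρ‖σ)), where β_x(ρ‖σ) := min{Tr(σQ) : 0 ≤ Q ≤ 1, Tr(ρQ) ≥ 1 − x}, and D_{−∞}(ρ‖σ) := −log λ_max(ρ^{-1/2}σρ^{-1/2}). -/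
open Matrix Filter
open scoped Matrix ComplexOrder

variable {n : Type*} [Fintype n] [DecidableEq n]

/-- `ρ` is a density operator: positive semidefinite with unit trace. -/
def IsDensity (ρ : Matrix n n ℂ) : Prop := ρ.PosSemidef ∧ ρ.trace = 1

/-- Optimal type-II error `β_x(ρ‖σ)` in binary quantum hypothesis testing:
the minimum of `Tr(σQ)` over tests `0 ≤ Q ≤ 1` with `Tr(ρQ) ≥ 1 − x`. -/
noncomputable def betaErr (x : ℝ) (ρ σ : Matrix n n ℂ) : ℝ :=
  sInf {v : ℝ | ∃ Q : Matrix n n ℂ, Q.PosSemidef ∧ (1 - Q).PosSemidef ∧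
    1 - x ≤ ((ρ * Q).trace).re ∧ v = ((σ * Q).trace).re}

open Classical in
/-- Real power of a Hermitian matrix via the spectral decomposition. -/
noncomputable def hrpow (A : Matrix n n ℂ) (α : ℝ) : Matrix n n ℂ :=
  if h : A.IsHermitian then
    (h.eigenvectorUnitary : Matrix n n ℂ) *
      Matrix.diagonal (fun i => ((h.eigenvalues i ^ α : ℝ) : ℂ)) *
      star (h.eigenvectorUnitary : Matrix n n ℂ)
  else A

open Classical in
/-- Minimal eigenvalue of a Hermitian matrix. -/
noncomputable def lamMin (A : Matrix n n ℂ) : ℝ :=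
  if h : A.IsHermitian then ⨅ i, h.eigenvalues i else 0

open Classical in
/-- Maximal eigenvalue of a Hermitian matrix. -/
noncomputable def lamMax (A : Matrix n n ℂ) : ℝ :=
  if h : A.IsHermitian then ⨆ i, h.eigenvalues i else 0

open Classical in
/-- Pinching map `P_σ(X)` with respect to the eigenspaces of `σ`:
in the eigenbasis of `σ`, off-diagonal blocks between distinct eigenvalues are erased. -/
noncomputable def pinch (σ X : Matrix n n ℂ) : Matrix n n ℂ :=
  if h : σ.IsHermitian then
    (h.eigenvectorUnitary : Matrix n n ℂ) *
      (Matrix.of fun i j =>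
        if h.eigenvalues i = h.eigenvalues j then
          (star (h.eigenvectorUnitary : Matrix n n ℂ) * X *
            (h.eigenvectorUnitary : Matrix n n ℂ)) i j
        else 0) *
      star (h.eigenvectorUnitary : Matrix n n ℂ)
  else X

/-- Trace distance `T(A,B) = (1/2)‖A − B‖₁`. -/
noncomputable def traceDist (A B : Matrix n n ℂ) : ℝ :=
  (1 / 2) * ((((Matrix.posSemidef_conjTranspose_mul_self (A - B)).1.eigenvectorUnitary : Matrix n n ℂ) *
    Matrix.diagonal (fun i => ((Real.sqrt ((Matrix.posSemidef_conjTranspose_mul_self (A - B)).1.eigenvalues i) : ℝ) : ℂ)) *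
    (star (Matrix.posSemidef_conjTranspose_mul_self (A - B)).1.eigenvectorUnitary : Matrix n n ℂ)).trace).re

/-- `n`-fold tensor (Kronecker) power of a matrix. -/
noncomputable def tensorPow {d : ℕ} (ρ : Matrix (Fin d) (Fin d) ℂ) (m : ℕ) :
    Matrix (Fin m → Fin d) (Fin m → Fin d) ℂ :=
  fun f g => ∏ i, ρ (f i) (g i)

/-- A quantum channel from a `d₁`- to a `d₂`-dimensional system, presented by
Kraus operators (equivalently, a completely positive trace-preserving map). -/
structure QChannel (d₁ d₂ : ℕ) where
  k : ℕ
  K : Fin k → Matrix (Fin d₂) (Fin d₁) ℂ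
  tp : ∑ i, (K i)ᴴ * K i = 1

/-- Action of a quantum channel on a matrix. -/
noncomputable def QChannel.apply {d₁ d₂ : ℕ} (E : QChannel d₁ d₂)
    (X : Matrix (Fin d₁) (Fin d₁) ℂ) : Matrix (Fin d₂) (Fin d₂) ℂ :=
  ∑ i, E.K i * X * (E.K i)ᴴ

/-- Classical Rényi relative entropy of a (commuting) pair of matrices,
`D_α(A‖B) = (1/(α−1)) ln Tr(A^α B^{1−α})`. -/
noncomputable def renyiDiv (α : ℝ) (A B : Matrix n n ℂ) : ℝ :=
  (α - 1)⁻¹ * Real.log (((hrpow A α * hrpow B (1 - α)).trace).re)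

/-- Minimal (sandwiched) Rényi relative entropy, `α ≤ 1/2` branch:
`D̃_α(ρ‖σ) = (1/(α−1)) ln Tr((√σ ρ^{α/(1−α)} √σ)^{1−α})`. -/
noncomputable def minRenyiDiv (α : ℝ) (ρ σ : Matrix n n ℂ) : ℝ :=
  (α - 1)⁻¹ * Real.log
    (((hrpow (hrpow σ (1 / 2) * hrpow ρ (α / (1 - α)) * hrpow σ (1 / 2)) (1 - α)).trace).re)


/-! ### Auxiliary lemmas -/

section Aux

lemma hrpow_eq' {A : Matrix n n ℂ} (h : A.IsHermitian) (α : ℝ) :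
    hrpow A α = (h.eigenvectorUnitary : Matrix n n ℂ) *
      Matrix.diagonal (fun i => ((h.eigenvalues i ^ α : ℝ) : ℂ)) *
      star (h.eigenvectorUnitary : Matrix n n ℂ) := dif_pos h

lemma diag_real_isHermitian' (f : n → ℝ) :
    (Matrix.diagonal (fun i => ((f i : ℝ) : ℂ))).IsHermitian := by
  apply Matrix.isHermitian_diagonal_of_self_adjoint
  funext i
  exact Complex.conj_ofReal _

lemma conj_diag_isHermitian' {A : Matrix n n ℂ} (h : A.IsHermitian) (f : n → ℝ) :
    ((h.eigenvectorUnitary : Matrix n n ℂ) * Matrix.diagonal (fun i => ((f i : ℝ) : ℂ)) *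
      star (h.eigenvectorUnitary : Matrix n n ℂ)).IsHermitian := by
  rw [Matrix.star_eq_conjTranspose]
  exact Matrix.isHermitian_mul_mul_conjTranspose _ (diag_real_isHermitian' f)

lemma conj_diag_posSemidef' {A : Matrix n n ℂ} (h : A.IsHermitian) {f : n → ℝ}
    (hf : ∀ i, 0 ≤ f i) :
    ((h.eigenvectorUnitary : Matrix n n ℂ) * Matrix.diagonal (fun i => ((f i : ℝ) : ℂ)) *
      star (h.eigenvectorUnitary : Matrix n n ℂ)).PosSemidef := by
  rw [Matrix.star_eq_conjTranspose]
  refine Matrix.PosSemidef.mul_mul_conjTranspose_same ?_ _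
  exact Matrix.posSemidef_diagonal_iff.mpr fun i => Complex.zero_le_real.mpr (hf i)

lemma hrpow_isHermitian' {A : Matrix n n ℂ} (h : A.IsHermitian) (α : ℝ) :
    (hrpow A α).IsHermitian := by
  rw [hrpow_eq' h]; exact conj_diag_isHermitian' h _

lemma hrpow_mul_hrpow' {A : Matrix n n ℂ} (h : A.IsHermitian)
    (hpos : ∀ i, 0 < h.eigenvalues i) (a b : ℝ) :
    hrpow A a * hrpow A b = hrpow A (a + b) := by
  rw [hrpow_eq' h, hrpow_eq' h, hrpow_eq' h]
  have hU : star (h.eigenvectorUnitary : Matrix n n ℂ) * (h.eigenvectorUnitary : Matrix n n ℂ)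
      = 1 := Unitary.coe_star_mul_self _
  calc (h.eigenvectorUnitary : Matrix n n ℂ)
        * Matrix.diagonal (fun i => ((h.eigenvalues i ^ a : ℝ) : ℂ))
        * star (h.eigenvectorUnitary : Matrix n n ℂ)
        * ((h.eigenvectorUnitary : Matrix n n ℂ)
          * Matrix.diagonal (fun i => ((h.eigenvalues i ^ b : ℝ) : ℂ))
          * star (h.eigenvectorUnitary : Matrix n n ℂ))
      = (h.eigenvectorUnitary : Matrix n n ℂ)
        * (Matrix.diagonal (fun i => ((h.eigenvalues i ^ a : ℝ) : ℂ))
          * Matrix.diagonal (fun i => ((h.eigenvalues i ^ b : ℝ) : ℂ)))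
        * star (h.eigenvectorUnitary : Matrix n n ℂ) := by
        simp only [Matrix.mul_assoc]
        rw [← Matrix.mul_assoc (star (h.eigenvectorUnitary : Matrix n n ℂ)), hU, Matrix.one_mul]
    _ = _ := by
        rw [Matrix.diagonal_mul_diagonal]
        have : (fun i => ((h.eigenvalues i ^ a : ℝ) : ℂ) * ((h.eigenvalues i ^ b : ℝ) : ℂ))
            = fun i => ((h.eigenvalues i ^ (a + b) : ℝ) : ℂ) :=
          funext fun i => by rw [← Complex.ofReal_mul, ← Real.rpow_add (hpos i)]
        rw [this]

lemma hrpow_zero' {A : Matrix n n ℂ} (h : A.IsHermitian) : hrpow A 0 = 1 := by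
  rw [hrpow_eq' h]
  have : (fun i => ((h.eigenvalues i ^ (0:ℝ) : ℝ) : ℂ)) = fun _ => (1:ℂ) := by
    ext i; simp [Real.rpow_zero]
  rw [this, Matrix.diagonal_one, Matrix.mul_one]
  exact Unitary.coe_mul_star_self _

lemma hrpow_one' {A : Matrix n n ℂ} (h : A.IsHermitian) : hrpow A 1 = A := by
  rw [hrpow_eq' h]
  have : (fun i => ((h.eigenvalues i ^ (1:ℝ) : ℝ) : ℂ)) = RCLike.ofReal ∘ h.eigenvalues := by
    ext i; simp [Real.rpow_one]
  rw [this, ← Unitary.conjStarAlgAut_apply (S := ℂ), ← h.spectral_theorem]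

lemma conj_smul_one' {A : Matrix n n ℂ} (h : A.IsHermitian) (c : ℂ) :
    (h.eigenvectorUnitary : Matrix n n ℂ) * (c • (1 : Matrix n n ℂ)) *
      star (h.eigenvectorUnitary : Matrix n n ℂ) = c • 1 := by
  rw [Matrix.mul_smul, Matrix.mul_one, Matrix.smul_mul]
  congr 1
  exact Unitary.coe_mul_star_self _

/-- `c•1 - A` is PSD when all eigenvalues of `A` are at most `c`. -/
lemma smul_one_sub_psd' {A : Matrix n n ℂ} (h : A.IsHermitian) {c : ℝ}
    (hc : ∀ i, h.eigenvalues i ≤ c) : ((c : ℂ) • 1 - A).PosSemidef := by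
  have key : (c : ℂ) • (1 : Matrix n n ℂ) - A =
      (h.eigenvectorUnitary : Matrix n n ℂ) *
        Matrix.diagonal (fun i => ((c - h.eigenvalues i : ℝ) : ℂ)) *
        star (h.eigenvectorUnitary : Matrix n n ℂ) := by
    have hdiag : Matrix.diagonal (fun i => ((c - h.eigenvalues i : ℝ) : ℂ)) =
        (c : ℂ) • (1 : Matrix n n ℂ) - Matrix.diagonal (RCLike.ofReal ∘ h.eigenvalues) := by
      ext i j
      rcases eq_or_ne i j with rfl | hij
      · simp [Complex.ofReal_sub]
      · simp [Matrix.diagonal_apply_ne _ hij, Matrix.one_apply_ne hij]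
    rw [hdiag, Matrix.mul_sub, Matrix.sub_mul, conj_smul_one' h, ← Unitary.conjStarAlgAut_apply (S := ℂ), ← h.spectral_theorem]
  rw [key]
  exact conj_diag_posSemidef' h fun i => sub_nonneg.mpr (hc i)

/-- `A - c•1` is PSD when all eigenvalues of `A` are at least `c`. -/
lemma sub_smul_one_psd' {A : Matrix n n ℂ} (h : A.IsHermitian) {c : ℝ}
    (hc : ∀ i, c ≤ h.eigenvalues i) : (A - (c : ℂ) • 1).PosSemidef := by
  have key : A - (c : ℂ) • (1 : Matrix n n ℂ) =
      (h.eigenvectorUnitary : Matrix n n ℂ) *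
        Matrix.diagonal (fun i => ((h.eigenvalues i - c : ℝ) : ℂ)) *
        star (h.eigenvectorUnitary : Matrix n n ℂ) := by
    have hdiag : Matrix.diagonal (fun i => ((h.eigenvalues i - c : ℝ) : ℂ)) =
        Matrix.diagonal (RCLike.ofReal ∘ h.eigenvalues) - (c : ℂ) • (1 : Matrix n n ℂ) := by
      ext i j
      rcases eq_or_ne i j with rfl | hij
      · simp [Complex.ofReal_sub]
      · simp [Matrix.diagonal_apply_ne _ hij, Matrix.one_apply_ne hij]
    rw [hdiag, Matrix.mul_sub, Matrix.sub_mul, conj_smul_one' h, ← Unitary.conjStarAlgAut_apply (S := ℂ), ← h.spectral_theorem]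
  rw [key]
  exact conj_diag_posSemidef' h fun i => sub_nonneg.mpr (hc i)

/-- A real nonnegative scalar multiple of a PSD matrix is PSD. -/
lemma psd_real_smul' {A : Matrix n n ℂ} (hA : A.PosSemidef) {c : ℝ} (hc : 0 ≤ c) :
    ((c : ℂ) • A).PosSemidef := by
  refine Matrix.PosSemidef.of_dotProduct_mulVec_nonneg ?_ ?_
  · rw [Matrix.IsHermitian, Matrix.conjTranspose_smul, hA.1.eq]
    congr 1
    exact Complex.conj_ofReal c
  · intro x
    rw [Matrix.smul_mulVec, dotProduct_smul]
    exact smul_nonneg (Complex.zero_le_real.mpr hc) (hA.dotProduct_mulVec_nonneg x)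

/-- The real part of the trace of a PSD matrix is nonnegative. -/
lemma psd_trace_re_nonneg' {A : Matrix n n ℂ} (hA : A.PosSemidef) : 0 ≤ (A.trace).re := by
  rw [Matrix.trace]
  have h : ∀ i, 0 ≤ (A i i).re := by
    intro i
    have := hA.re_dotProduct_nonneg (Pi.single i 1)
    simpa [dotProduct, Pi.single_apply] using this
  rw [Complex.re_sum]
  exact Finset.sum_nonneg fun i _ => h i

open scoped MatrixOrder in
/-- The real part of the trace of a product of PSD matrices is nonnegative. -/
lemma psd_trace_mul_re_nonneg' {A B : Matrix n n ℂ} (hA : A.PosSemidef) (hB : B.PosSemidef) :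
    0 ≤ ((A * B).trace).re := by
  have hs := Matrix.nonneg_iff_posSemidef.mp (CFC.sqrt_nonneg A)
  have h1 : A * B = CFC.sqrt A * (CFC.sqrt A * B) := by
    rw [← Matrix.mul_assoc, CFC.sqrt_mul_sqrt_self A hA.nonneg]
  rw [h1, Matrix.trace_mul_comm]
  have h2 : CFC.sqrt A * B * CFC.sqrt A = CFC.sqrt A * B * (CFC.sqrt A)ᴴ := by rw [hs.1.eq]
  have h3 : (CFC.sqrt A * B * CFC.sqrt A).PosSemidef := by
    rw [h2]; exact hB.mul_mul_conjTranspose_same _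
  calc (0:ℝ) ≤ ((CFC.sqrt A * B * CFC.sqrt A).trace).re := psd_trace_re_nonneg' h3
    _ = ((CFC.sqrt A * B * CFC.sqrt A).trace).re := rfl
  -- note: `trace_mul_comm` already aligned the goal

lemma trace_mul_vecMulVec' (A : Matrix n n ℂ) (v w : n → ℂ) :
    (A * Matrix.vecMulVec v w).trace = w ⬝ᵥ (A *ᵥ v) := by
  simp only [Matrix.trace, Matrix.diag, Matrix.mul_apply, Matrix.vecMulVec_apply,
    dotProduct, Matrix.mulVec, dotProduct]
  congr 1
  ext i
  rw [Finset.mul_sum]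
  congr 1
  ext j
  ring

lemma vecMulVec_star_psd' (v : n → ℂ) : (Matrix.vecMulVec v (star v)).PosSemidef := by
  have h : Matrix.vecMulVec v (star v) =
      (Matrix.replicateRow Unit (star v))ᴴ * Matrix.replicateRow Unit (star v) := by
    ext i j
    simp [Matrix.vecMulVec_apply, Matrix.mul_apply, Matrix.replicateRow_apply, Matrix.conjTranspose_apply]
  rw [h]
  exact Matrix.posSemidef_conjTranspose_mul_self _

lemma one_sub_vecMulVec_psd' {v : n → ℂ} (hv : star v ⬝ᵥ v = 1) :
    (1 - Matrix.vecMulVec v (star v)).PosSemidef := by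
  set P := Matrix.vecMulVec v (star v) with hP
  have hPP : P * P = P := by
    ext i j
    simp only [hP, Matrix.mul_apply, Matrix.vecMulVec_apply, Pi.star_apply]
    have h1 : ∑ k, v i * star (v k) * (v k * star (v j))
        = v i * star (v j) * ∑ k, star (v k) * v k := by
      rw [Finset.mul_sum]; congr 1; ext k; ring
    rw [h1]
    have h2 : ∑ k, star (v k) * v k = (1 : ℂ) := by
      simpa [dotProduct] using hv
    rw [h2, mul_one]
  have hHerm : (1 - P).IsHermitian :=
    Matrix.IsHermitian.sub Matrix.isHermitian_one (vecMulVec_star_psd' v).1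
  have key : (1 - P) = (1 - P)ᴴ * (1 - P) := by
    rw [hHerm.eq, Matrix.mul_sub, Matrix.sub_mul, Matrix.sub_mul, Matrix.mul_one, Matrix.one_mul,
      Matrix.mul_one, hPP]
    abel
  rw [key]
  exact Matrix.posSemidef_conjTranspose_mul_self _

lemma conj_diag_posDef' {A : Matrix n n ℂ} (h : A.IsHermitian) {f : n → ℝ}
    (hf : ∀ i, 0 < f i) :
    ((h.eigenvectorUnitary : Matrix n n ℂ) * Matrix.diagonal (fun i => ((f i : ℝ) : ℂ)) *
      star (h.eigenvectorUnitary : Matrix n n ℂ)).PosDef := by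
  set U : Matrix n n ℂ := (h.eigenvectorUnitary : Matrix n n ℂ) with hU
  have hHerm : (U * Matrix.diagonal (fun i => ((f i : ℝ) : ℂ)) * star U).IsHermitian :=
    conj_diag_isHermitian' h f
  refine Matrix.PosDef.of_dotProduct_mulVec_pos hHerm fun x hx => ?_
  set y := star U *ᵥ x with hy
  have hyne : y ≠ 0 := by
    intro h0
    apply hx
    have hUU : U * star U = 1 := by rw [hU]; exact Unitary.coe_mul_star_self _
    have hxx : x = (U * star U) *ᵥ x := by rw [hUU, Matrix.one_mulVec]
    rw [hxx, ← Matrix.mulVec_mulVec, ← hy, h0, Matrix.mulVec_zero]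
  have hdot : star x ⬝ᵥ ((U * Matrix.diagonal (fun i => ((f i : ℝ) : ℂ)) * star U) *ᵥ x)
      = star y ⬝ᵥ (Matrix.diagonal (fun i => ((f i : ℝ) : ℂ)) *ᵥ y) := by
    rw [← Matrix.mulVec_mulVec, ← Matrix.mulVec_mulVec, Matrix.dotProduct_mulVec]
    congr 1
    rw [hy, Matrix.star_mulVec, Matrix.star_eq_conjTranspose, Matrix.conjTranspose_conjTranspose]
  rw [hdot]
  exact (Matrix.PosDef.diagonal fun i => Complex.zero_lt_real.mpr (hf i)).dotProduct_mulVec_pos hyne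

lemma posdef_conj' {R σ : Matrix n n ℂ} (hR : R.PosDef) (hσ : σ.PosDef) :
    (R * σ * R).PosDef := by
  have hRh := hR.isHermitian
  have hHerm : (R * σ * R).IsHermitian := by
    have h := Matrix.isHermitian_mul_mul_conjTranspose R hσ.isHermitian
    rwa [hRh.eq] at h
  refine Matrix.PosDef.of_dotProduct_mulVec_pos hHerm fun x hx => ?_
  set y := R *ᵥ x with hy
  have hyne : y ≠ 0 := by
    intro h0
    have h := hR.dotProduct_mulVec_pos hx
    rw [← hy, h0, dotProduct_zero] at h
    exact lt_irrefl _ h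
  have hdot : star x ⬝ᵥ ((R * σ * R) *ᵥ x) = star y ⬝ᵥ (σ *ᵥ y) := by
    rw [← Matrix.mulVec_mulVec, ← Matrix.mulVec_mulVec, Matrix.dotProduct_mulVec]
    congr 1
    rw [hy, Matrix.star_mulVec, hRh.eq]
  rw [hdot]
  exact hσ.dotProduct_mulVec_pos hyne

lemma evec_norm' {A : Matrix n n ℂ} (h : A.IsHermitian) (i : n) :
    star (⇑(h.eigenvectorBasis i) : n → ℂ) ⬝ᵥ (⇑(h.eigenvectorBasis i) : n → ℂ) = 1 := by
  have hn := h.eigenvectorBasis.orthonormal.1 i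
  have h2 : (inner ℂ (h.eigenvectorBasis i) (h.eigenvectorBasis i) : ℂ) = 1 := by
    rw [inner_self_eq_norm_sq_to_K, hn]
    norm_num
  rw [EuclideanSpace.inner_eq_star_dotProduct] at h2
  rwa [dotProduct_comm] at h2

end Aux

/-- Single-shot extreme-deviation hypothesis testing, low-`x` branch:
for `0 ≤ x ≤ λ_min(ρ)`, `1 − β_x(ρ‖σ) = x·exp(−D_{−∞}(ρ‖σ))` where
`D_{−∞}(ρ‖σ) = −ln λ_max(ρ^{-1/2}σρ^{-1/2})`. -/
theorem one_sub_betaErr_eq {d : ℕ} (hd : 0 < d) (ρ σ : Matrix (Fin d) (Fin d) ℂ)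
    (hρ : ρ.PosDef) (hσ : σ.PosDef) (hρtr : ρ.trace = 1) (hσtr : σ.trace = 1)
    (hM : (hrpow ρ (-(1 / 2)) * σ * hrpow ρ (-(1 / 2))).IsHermitian)
    (hnd : ∃! i : Fin d, hM.eigenvalues i = ⨆ j, hM.eigenvalues j)
    (x : ℝ) (hx0 : 0 ≤ x) (hx : x ≤ lamMin ρ) :
    1 - betaErr x ρ σ =
      x * Real.exp (-(-(Real.log (lamMax (hrpow ρ (-(1 / 2)) * σ * hrpow ρ (-(1 / 2))))))) := by
  haveI : Nonempty (Fin d) := Fin.pos_iff_nonempty.mp hd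
  set R := hrpow ρ (-(1 / 2)) with hRdef
  have hρ1 : ρ.IsHermitian := hρ.1
  have hpos : ∀ i, 0 < hρ1.eigenvalues i := fun i => hρ.eigenvalues_pos i
  have hRh : R.IsHermitian := hrpow_isHermitian' hρ1 _
  -- key products of powers of ρ
  have hRρR : R * ρ * R = 1 := by
    calc R * ρ * R = R * hrpow ρ 1 * R := by rw [hrpow_one' hρ1]
      _ = hrpow ρ (-(1 / 2) + 1 + -(1 / 2)) := by
          rw [hRdef, hrpow_mul_hrpow' hρ1 hpos, hrpow_mul_hrpow' hρ1 hpos]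
      _ = 1 := by norm_num [hrpow_zero' hρ1]
  set S := hrpow ρ (1 / 2) with hSdef
  have hSh : S.IsHermitian := hrpow_isHermitian' hρ1 _
  have hSR : S * R = 1 := by
    rw [hSdef, hRdef, hrpow_mul_hrpow' hρ1 hpos]
    norm_num [hrpow_zero' hρ1]
  have hRS : R * S = 1 := by
    rw [hSdef, hRdef, hrpow_mul_hrpow' hρ1 hpos]
    norm_num [hrpow_zero' hρ1]
  have hSS : S * S = ρ := by
    rw [hSdef, hrpow_mul_hrpow' hρ1 hpos]
    norm_num [hrpow_one' hρ1]
  -- M and its top eigenvalue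
  have hRpd : R.PosDef := by
    rw [hRdef, hrpow_eq' hρ1]
    exact conj_diag_posDef' hρ1 fun i => Real.rpow_pos_of_pos (hpos i) _
  have hMpd : (R * σ * R).PosDef := posdef_conj' hRpd hσ
  have hSMS : S * (R * σ * R) * S = σ := by
    have h1 : S * (R * σ * R) * S = (S * R) * σ * (R * S) := by noncomm_ring
    rw [h1, hSR, hRS, Matrix.one_mul, Matrix.mul_one]
  set lam := lamMax (R * σ * R) with hlamdef
  have hlamEq : lam = ⨆ j, hM.eigenvalues j := by rw [hlamdef, lamMax, dif_pos hM]
  obtain ⟨i₀, hi₀⟩ := exists_eq_ciSup_of_finite (f := hM.eigenvalues)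
  have hlam_i₀ : hM.eigenvalues i₀ = lam := by rw [hlamEq]; exact hi₀
  have hub : ∀ i, hM.eigenvalues i ≤ lam := fun i => by
    rw [hlamEq]; exact le_ciSup (Set.Finite.bddAbove (Set.finite_range _)) i
  have hlam_pos : 0 < lam := hlam_i₀ ▸ hMpd.eigenvalues_pos i₀
  -- eigenvector of M for lam
  set v : Fin d → ℂ := ⇑(hM.eigenvectorBasis i₀) with hvdef
  have hMv : (R * σ * R) *ᵥ v = lam • v := by
    rw [hvdef, hM.mulVec_eigenvectorBasis i₀, hlam_i₀]
  have hvnorm : star v ⬝ᵥ v = 1 := evec_norm' hM i₀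
  set P := Matrix.vecMulVec v (star v) with hPdef
  have hPψ : P.PosSemidef := vecMulVec_star_psd' v
  -- x is below all eigenvalues of ρ
  have hxlow : ∀ i, x ≤ hρ1.eigenvalues i := fun i => by
    refine le_trans hx ?_
    rw [lamMin, dif_pos hρ1]
    exact ciInf_le (Set.Finite.bddBelow (Set.finite_range _)) i
  -- the optimal test
  set Q₀ : Matrix (Fin d) (Fin d) ℂ := 1 - (x : ℂ) • (R * P * R) with hQ₀def
  have hRPR : (R * P * R).PosSemidef := by
    have h := hPψ.mul_mul_conjTranspose_same R
    rwa [hRh.eq] at h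
  have hQ₀sub : (1 - Q₀).PosSemidef := by
    rw [hQ₀def, sub_sub_cancel]
    exact psd_real_smul' hRPR hx0
  have hQ₀psd : Q₀.PosSemidef := by
    have hmid : (ρ - (x : ℂ) • P).PosSemidef := by
      have hsplit : ρ - (x : ℂ) • P = (ρ - (x : ℂ) • 1) + (x : ℂ) • (1 - P) := by
        rw [smul_sub]; abel
      rw [hsplit]
      exact (sub_smul_one_psd' hρ1 hxlow).add (psd_real_smul' (one_sub_vecMulVec_psd' hvnorm) hx0)
    have hconj : (R * (ρ - (x : ℂ) • P) * R).PosSemidef := by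
      have h := hmid.mul_mul_conjTranspose_same R
      rwa [hRh.eq] at h
    have heq : R * (ρ - (x : ℂ) • P) * R = Q₀ := by
      rw [Matrix.mul_sub, Matrix.sub_mul, Matrix.mul_smul, Matrix.smul_mul, hRρR, hQ₀def]
    rwa [heq] at hconj
  -- trace identities for the optimal test
  have htraceP : P.trace = 1 := by
    have h1 : P.trace = (1 * P).trace := by rw [Matrix.one_mul]
    rw [h1, trace_mul_vecMulVec', Matrix.one_mulVec, hvnorm]
  have hρRPR : (ρ * (R * P * R)).trace = 1 := by
    have h1 : ρ * (R * P * R) = (ρ * R * P) * R := by noncomm_ring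
    have h2 : R * (ρ * R * P) = (R * ρ * R) * P := by noncomm_ring
    rw [h1, Matrix.trace_mul_comm, h2, hRρR, Matrix.one_mul, htraceP]
  have hσRPR : (σ * (R * P * R)).trace = (lam : ℂ) := by
    have h1 : σ * (R * P * R) = (σ * R * P) * R := by noncomm_ring
    have h2 : R * (σ * R * P) = (R * σ * R) * P := by noncomm_ring
    rw [h1, Matrix.trace_mul_comm, h2, hPdef, trace_mul_vecMulVec', hMv,
      dotProduct_smul, hvnorm]
    simp [Complex.real_smul]
  have hρQ₀ : ((ρ * Q₀).trace).re = 1 - x := by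
    have h1 : ρ * Q₀ = ρ - (x : ℂ) • (ρ * (R * P * R)) := by
      rw [hQ₀def, Matrix.mul_sub, Matrix.mul_one, Matrix.mul_smul]
    rw [h1, Matrix.trace_sub, Matrix.trace_smul, hρRPR, hρtr, smul_eq_mul, mul_one]
    simp
  have hσQ₀ : ((σ * Q₀).trace).re = 1 - x * lam := by
    have h1 : σ * Q₀ = σ - (x : ℂ) • (σ * (R * P * R)) := by
      rw [hQ₀def, Matrix.mul_sub, Matrix.mul_one, Matrix.mul_smul]
    rw [h1, Matrix.trace_sub, Matrix.trace_smul, hσRPR, hσtr, smul_eq_mul,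
      ← Complex.ofReal_mul]
    simp
  -- membership of the value 1 - x*lam
  have hmem : (1 - x * lam) ∈ {w : ℝ | ∃ Q : Matrix (Fin d) (Fin d) ℂ, Q.PosSemidef ∧
      (1 - Q).PosSemidef ∧ 1 - x ≤ ((ρ * Q).trace).re ∧ w = ((σ * Q).trace).re} :=
    ⟨Q₀, hQ₀psd, hQ₀sub, le_of_eq hρQ₀.symm, hσQ₀.symm⟩
  -- lower bound for every feasible value
  have hlb : ∀ w ∈ {w : ℝ | ∃ Q : Matrix (Fin d) (Fin d) ℂ, Q.PosSemidef ∧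
      (1 - Q).PosSemidef ∧ 1 - x ≤ ((ρ * Q).trace).re ∧ w = ((σ * Q).trace).re},
      1 - x * lam ≤ w := by
    rintro w ⟨Q, hQ, hQ1, hQρ, rfl⟩
    set A := S * (1 - Q) * S with hAdef
    have hApsd : A.PosSemidef := by
      have h := hQ1.mul_mul_conjTranspose_same S
      rwa [hSh.eq] at h
    have htrA : A.trace = (ρ * (1 - Q)).trace := by
      rw [hAdef, Matrix.trace_mul_comm, ← Matrix.mul_assoc, hSS]
    have htrA_le : (A.trace).re ≤ x := by
      rw [htrA, Matrix.mul_sub, Matrix.mul_one, Matrix.trace_sub, hρtr]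
      have : (1 - (ρ * Q).trace).re = 1 - ((ρ * Q).trace).re := by simp
      rw [this]
      linarith
    have htrA_nonneg : 0 ≤ (A.trace).re := psd_trace_re_nonneg' hApsd
    have hσ1Q : (σ * (1 - Q)).trace = ((R * σ * R) * A).trace := by
      have h1 : σ * (1 - Q) = (S * (R * σ * R)) * (S * (1 - Q)) := by
        rw [← Matrix.mul_assoc, hSMS]
      have h2 : (S * (1 - Q)) * (S * (R * σ * R)) = A * (R * σ * R) := by
        rw [hAdef]; noncomm_ring
      rw [h1, Matrix.trace_mul_comm, h2, Matrix.trace_mul_comm]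
    have hkey : ((σ * (1 - Q)).trace).re ≤ lam * (A.trace).re := by
      have hpsd1 : ((lam : ℂ) • 1 - (R * σ * R)).PosSemidef := smul_one_sub_psd' hM hub
      have h0 : 0 ≤ ((((lam : ℂ) • 1 - (R * σ * R)) * A).trace).re :=
        psd_trace_mul_re_nonneg' hpsd1 hApsd
      have hexp : (((lam : ℂ) • 1 - (R * σ * R)) * A).trace
          = (lam : ℂ) * A.trace - ((R * σ * R) * A).trace := by
        rw [Matrix.sub_mul, Matrix.smul_mul, Matrix.one_mul, Matrix.trace_sub,
          Matrix.trace_smul, smul_eq_mul]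
      rw [hexp] at h0
      have hre : ((lam : ℂ) * A.trace - ((R * σ * R) * A).trace).re
          = lam * (A.trace).re - (((R * σ * R) * A).trace).re := by
        simp [Complex.sub_re, Complex.mul_re]
      rw [hre] at h0
      rw [hσ1Q]
      linarith
    have hfinal : ((σ * (1 - Q)).trace).re ≤ lam * x :=
      le_trans hkey (mul_le_mul_of_nonneg_left htrA_le (le_of_lt hlam_pos))
    have hσsplit : ((σ * Q).trace).re = 1 - ((σ * (1 - Q)).trace).re := by
      have h1 : σ * (1 - Q) = σ - σ * Q := by rw [Matrix.mul_sub, Matrix.mul_one]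
      rw [h1, Matrix.trace_sub, hσtr]
      simp
    rw [hσsplit]
    nlinarith
  -- compute the infimum
  have hbeta : betaErr x ρ σ = 1 - x * lam := by
    rw [betaErr]
    exact le_antisymm (csInf_le ⟨1 - x * lam, hlb⟩ hmem) (le_csInf ⟨1 - x * lam, hmem⟩ hlb)
  rw [hbeta, neg_neg, Real.exp_log hlam_pos]
  ring
end

section
/- Let {f_n} be a sequence of functions from a compact interval [a,b] to ℝ, each monotone (all non-decreasing, or all non-increasing), converging pointwise to a continuous function f. Then the convergence f_n → f is uniform on [a,b]. -/
open Filter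

private lemma aux_mono (a b : ℝ) (hab : a < b)
    (f : ℕ → ℝ → ℝ) (g : ℝ → ℝ)
    (hmono : ∀ n, MonotoneOn (f n) (Set.Icc a b))
    (hcont : ContinuousOn g (Set.Icc a b))
    (hpt : ∀ x ∈ Set.Icc a b, Tendsto (fun n => f n x) atTop (nhds (g x))) :
    TendstoUniformlyOn f g atTop (Set.Icc a b) := by
  rw [Metric.tendstoUniformlyOn_iff]
  intro ε hε
  obtain ⟨δ, hδ, hgδ⟩ := Metric.uniformContinuousOn_iff.1
    (isCompact_Icc.uniformContinuousOn_of_continuous hcont) (ε/4) (by linarith)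
  obtain ⟨k, hk⟩ := exists_nat_gt ((b - a) / δ)
  have hk0 : 0 < (k : ℝ) := lt_of_le_of_lt (div_nonneg (by linarith) hδ.le) hk
  set h : ℝ := (b - a) / k with hh
  have hhpos : 0 < h := div_pos (by linarith) hk0
  have hhδ : h < δ := by
    rw [hh, div_lt_iff₀ hk0]
    rw [div_lt_iff₀ hδ] at hk
    nlinarith
  set p : ℕ → ℝ := fun i => a + i * h with hp
  have hpk : p k = b := by
    simp only [hp, hh]; field_simp; ring
  have hpmem : ∀ i ≤ k, p i ∈ Set.Icc a b := by
    intro i hi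
    constructor
    · simp only [hp]; nlinarith [Nat.cast_nonneg (α := ℝ) i]
    · have hkh : (k:ℝ) * h = b - a := by rw [hh]; field_simp
      have : (i:ℝ)*h ≤ (k:ℝ)*h :=
        mul_le_mul_of_nonneg_right (Nat.cast_le.2 hi) hhpos.le
      simp only [hp]; linarith
  have E : ∀ᶠ n in atTop, ∀ i ∈ Finset.range (k+1), dist (f n (p i)) (g (p i)) < ε/4 := by
    rw [eventually_all_finset]
    intro i hi
    have hi' : i ≤ k := Nat.lt_succ_iff.1 (Finset.mem_range.1 hi)
    exact (Metric.tendsto_nhds.1 (hpt (p i) (hpmem i hi'))) (ε/4) (by linarith)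
  filter_upwards [E] with n hn x hx
  -- find i with p i ≤ x ≤ p (i+1), i+1 ≤ k
  have hxa : a ≤ x := hx.1
  have hxb : x ≤ b := hx.2
  have hk1 : 1 ≤ k := by
    by_contra hc
    interval_cases k
    · simp at hk0
  set j : ℕ := ⌊(x - a) / h⌋₊ with hj
  set i : ℕ := min j (k - 1) with hi
  have hik : i + 1 ≤ k := by omega
  have hpi_le : p i ≤ x := by
    rcases le_or_gt j (k-1) with hcase | hcase
    · have : i = j := min_eq_left hcase
      rw [this]
      have h1 : (j:ℝ) ≤ (x - a)/h := Nat.floor_le (div_nonneg (by linarith) hhpos.le)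
      have h2 : (j:ℝ)*h ≤ x - a := (le_div_iff₀ hhpos).1 h1
      simp only [hp]; linarith
    ·
      have hjk : k ≤ j := by omega
      have : (k : ℝ) ≤ (x - a)/h := le_trans (Nat.cast_le.2 hjk) (Nat.floor_le (div_nonneg (by linarith) hhpos.le)) |>.trans_eq rfl
      have hik' : i = k - 1 := min_eq_right (by omega)
      have h1 : ((k : ℝ)) * h ≤ x - a := (le_div_iff₀ hhpos).1 this
      have h2 : ((i : ℝ)) = (k : ℝ) - 1 := by
        rw [hik']; push_cast [Nat.cast_sub hk1]; ring
      simp only [hp]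
      rw [h2]; nlinarith
  have hpi1_ge : x ≤ p (i+1) := by
    rcases le_or_gt j (k-1) with hcase | hcase
    · have hij : i = j := min_eq_left hcase
      have := Nat.lt_floor_add_one ((x - a)/h)
      rw [div_lt_iff₀ hhpos] at this
      simp only [hp, hij]
      push_cast
      nlinarith
    · have hik' : i = k - 1 := min_eq_right (by omega)
      have : i + 1 = k := by omega
      rw [this, hpk]; exact hxb
  have hxmem := hx
  have hpimem := hpmem i (by omega)
  have hpi1mem := hpmem (i+1) hik
  have hgap : p (i+1) - p i = h := by simp only [hp]; push_cast; ring
  have hd1 : dist (g x) (g (p i)) < ε/4 := by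
    refine hgδ x hxmem (p i) hpimem ?_
    rw [Real.dist_eq, abs_of_nonneg (by linarith)]
    have : x ≤ p i + h := by linarith
    linarith
  have hd2 : dist (g x) (g (p (i+1))) < ε/4 := by
    refine hgδ x hxmem (p (i+1)) hpi1mem ?_
    rw [Real.dist_eq, abs_of_nonpos (by linarith)]
    have : p (i+1) - h ≤ x := by linarith
    linarith
  have hfl : f n (p i) ≤ f n x := hmono n hpimem hxmem hpi_le
  have hfu : f n x ≤ f n (p (i+1)) := hmono n hxmem hpi1mem hpi1_ge
  have e1 : |f n (p i) - g (p i)| < ε/4 := hn i (Finset.mem_range.2 (by omega))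
  have e2 : |f n (p (i+1)) - g (p (i+1))| < ε/4 := hn (i+1) (Finset.mem_range.2 (by omega))
  rw [Real.dist_eq] at hd1 hd2 ⊢
  rw [abs_lt] at e1 e2 hd1 hd2
  rw [abs_lt]
  constructor <;> [nlinarith; nlinarith]

/-- Pointwise convergence of monotone functions on a compact interval to a continuous
limit is uniform. -/
theorem tendstoUniformlyOn_of_monotone (a b : ℝ) (hab : a ≤ b)
    (f : ℕ → ℝ → ℝ) (g : ℝ → ℝ)
    (hmono : (∀ n, MonotoneOn (f n) (Set.Icc a b)) ∨ (∀ n, AntitoneOn (f n) (Set.Icc a b)))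
    (hcont : ContinuousOn g (Set.Icc a b))
    (hpt : ∀ x ∈ Set.Icc a b, Tendsto (fun n => f n x) atTop (nhds (g x))) :
    TendstoUniformlyOn f g atTop (Set.Icc a b) := by
  rcases eq_or_lt_of_le hab with rfl | hlt
  · rw [Set.Icc_self, Metric.tendstoUniformlyOn_iff]
    intro ε hε
    filter_upwards [(Metric.tendsto_nhds.1 (hpt a (by simp))) ε hε] with n hn x hx
    rw [Set.mem_singleton_iff] at hx
    subst hx
    rwa [dist_comm]
  rcases hmono with hm | hm
  · exact aux_mono a b hlt f g hm hcont hpt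
  · have := aux_mono a b hlt (fun n x => -(f n x)) (fun x => -g x)
      (fun n => (hm n).neg) (hcont.neg)
      (fun x hx => (hpt x hx).neg)
    rw [Metric.tendstoUniformlyOn_iff] at this ⊢
    intro ε hε
    filter_upwards [this ε hε] with n hn x hx
    have := hn x hx
    rwa [dist_neg_neg] at this
end
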